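/- arXiv:1710.03514 — 3 statements merged into one kernel-verified Lean document; each statement's English description precedes it below -/
import Mathlib

section
/- Let λ₁ be a special symplectic partition of 2n₁ and λ₂ a special orthogonal partition of 2n₂. Say that index j is of good parity if λ_{1,j} is even and λ_{2,j} is odd. Define J^+ as the set of odd j ≥ 1 such that λ_{1,j} is even, λ_{2,j} is odd, and for some d ∈ {1,2} one has λ_{d,j-1} > λ_{d,j} (with λ_{d,0} = ∞); define J^- as the set of even j ≥ 1 such that λ_{1,j} is even, λ_{2,j} is odd, and for some d ∈ {1,2} one has λ_{d,j} > λ_{d,j+1}. Then |J^+| = |J^-|, and listing J^+ = {j⁺_1 < ... < j⁺_a} and J^- = {j⁻_1 < ... < j⁻_a}, one has j⁺_1 < j⁻_1 < j⁺_2 < ... < j⁺_a < j⁻_a. -/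
open Classical

noncomputable section

/-- A partition: weakly decreasing on indices `j ≥ 1` (parts are `l 1 ≥ l 2 ≥ ...`). -/
def IsPartition (l : ℕ → ℕ) : Prop := ∀ j, 1 ≤ j → l (j + 1) ≤ l j

/-- The parts vanish eventually (finitely many nonzero parts). -/
def EventuallyZero (l : ℕ → ℕ) : Prop := ∃ N, ∀ j, N ≤ j → l j = 0

/-- Multiplicity of `i` as a part of `l`. -/
def mult (l : ℕ → ℕ) (i : ℕ) : ℕ := Nat.card {j : ℕ | 1 ≤ j ∧ l j = i}

/-- The sum of the parts of `l`. -/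
def psum (l : ℕ → ℕ) : ℕ := ∑ᶠ j : ℕ, l (j + 1)

/-- Symplectic: every odd part occurs with even multiplicity. -/
def IsSymplectic (l : ℕ → ℕ) : Prop := ∀ i, Odd i → Even (mult l i)

/-- Orthogonal: every even positive part occurs with even multiplicity. -/
def IsOrthogonal (l : ℕ → ℕ) : Prop := ∀ i, 0 < i → Even i → Even (mult l i)

/-- Special: `l (2j-1)` and `l (2j)` have the same parity for all `j ≥ 1`. -/
def IsSpecial (l : ℕ → ℕ) : Prop := ∀ j, 1 ≤ j → l (2 * j - 1) % 2 = l (2 * j) % 2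

/-- `P^+(λ)`: odd `j` with `λ_j` even and `λ_{j-1} > λ_j` (convention `λ_0 = ∞`). -/
def Pplus (l : ℕ → ℕ) : Set ℕ := {j | Odd j ∧ Even (l j) ∧ (j = 1 ∨ l (j - 1) > l j)}

/-- `P^-(λ)`: even `j ≥ 2` with `λ_j` even and `λ_j > λ_{j+1}`. -/
def Pminus (l : ℕ → ℕ) : Set ℕ := {j | 2 ≤ j ∧ Even j ∧ Even (l j) ∧ l j > l (j + 1)}

/-- `Q^+(λ)`: even `j ≥ 2` with `λ_j` odd and `λ_{j-1} > λ_j`. -/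
def Qplus (l : ℕ → ℕ) : Set ℕ := {j | 2 ≤ j ∧ Even j ∧ Odd (l j) ∧ l (j - 1) > l j}

/-- `Q^-(λ)`: odd `j ≥ 1` with `λ_j` odd and `λ_j > λ_{j+1}`. -/
def Qminus (l : ℕ → ℕ) : Set ℕ := {j | Odd j ∧ Odd (l j) ∧ l j > l (j + 1)}

/-- Orthogonal version of `P^+`: odd `j` with `λ_j` odd and `λ_{j-1} > λ_j` (`λ_0 = ∞`). -/
def PplusO (l : ℕ → ℕ) : Set ℕ := {j | Odd j ∧ Odd (l j) ∧ (j = 1 ∨ l (j - 1) > l j)}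

/-- Orthogonal version of `P^-`: even `j ≥ 2` with `λ_j` odd and `λ_j > λ_{j+1}`. -/
def PminusO (l : ℕ → ℕ) : Set ℕ := {j | 2 ≤ j ∧ Even j ∧ Odd (l j) ∧ l j > l (j + 1)}

/-- The sequence `s(λ)`: `1` on `Q^+`, `-1` on `Q^-`, `0` elsewhere. -/
def sSeq (l : ℕ → ℕ) (j : ℕ) : ℤ :=
  if j ∈ Qplus l then 1 else if j ∈ Qminus l then -1 else 0

/-- The sequence `ζ(λ)`: `1` on `P^+`, `-1` on `P^-`, `0` elsewhere. -/
def zSeq (l : ℕ → ℕ) (j : ℕ) : ℤ :=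
  if j ∈ Pplus l then 1 else if j ∈ Pminus l then -1 else 0

/-- Orthogonal `ζ(λ)`: `1` on `PplusO`, `-1` on `PminusO`, `0` elsewhere. -/
def zSeqO (l : ℕ → ℕ) (j : ℕ) : ℤ :=
  if j ∈ PplusO l then 1 else if j ∈ PminusO l then -1 else 0

/-- `sp(λ) = λ + s(λ)` (termwise, truncated to ℕ). -/
def spPart (l : ℕ → ℕ) (j : ℕ) : ℕ := ((l j : ℤ) + sSeq l j).toNat

/-- Dominance order on partitions. -/
def Dom (l m : ℕ → ℕ) : Prop :=
  ∀ k, ∑ j ∈ Finset.range k, l (j + 1) ≤ ∑ j ∈ Finset.range k, m (j + 1)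

/-- `j_min(i)`: smallest index `j ≥ 1` with `l j = i`. -/
def jminPart (l : ℕ → ℕ) (i : ℕ) : ℕ := sInf {j | 1 ≤ j ∧ l j = i}

/-- `j_max(i)`: largest index `j ≥ 1` with `l j = i`. -/
def jmaxPart (l : ℕ → ℕ) (i : ℕ) : ℕ := sSup {j | 1 ≤ j ∧ l j = i}

/-- `iSeq 1 > iSeq 2 > ... > iSeq t` enumerates the even positive parts of odd
multiplicity of the symplectic partition `l`, completed by a final `0` if their
number is odd (so that `t` is even). -/
def MarkedSeq (l : ℕ → ℕ) (iSeq : ℕ → ℕ) (t : ℕ) : Prop :=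
  Even t ∧
  (∀ h h', 1 ≤ h → h < h' → h' ≤ t → iSeq h' < iSeq h) ∧
  (∀ h, 1 ≤ h → h ≤ t → Even (iSeq h)) ∧
  (∀ h, 1 ≤ h → h ≤ t → iSeq h ≠ 0 → Odd (mult l (iSeq h))) ∧
  (∀ i, 0 < i → Even i → Odd (mult l i) → ∃ h, 1 ≤ h ∧ h ≤ t ∧ iSeq h = i)

/-- Orthogonal analogue: `iSeq` enumerates the odd parts of odd multiplicity. -/
def MarkedSeqO (l : ℕ → ℕ) (iSeq : ℕ → ℕ) (t : ℕ) : Prop :=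
  Even t ∧
  (∀ h h', 1 ≤ h → h < h' → h' ≤ t → iSeq h' < iSeq h) ∧
  (∀ h, 1 ≤ h → h ≤ t → Odd (iSeq h)) ∧
  (∀ h, 1 ≤ h → h ≤ t → Odd (mult l (iSeq h))) ∧
  (∀ i, Odd i → Odd (mult l i) → ∃ h, 1 ≤ h ∧ h ≤ t ∧ iSeq h = i)

/-- `i` lies in the range `[i_{2h}, i_{2h-1}]` for some `h`. -/
def InRange (iSeq : ℕ → ℕ) (t : ℕ) (i : ℕ) : Prop :=
  ∃ h, 1 ≤ h ∧ 2 * h ≤ t ∧ iSeq (2 * h) ≤ i ∧ i ≤ iSeq (2 * h - 1)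

/-- Intervals of a (special symplectic) partition `l`, relative to the marked
sequence `iSeq` of length `t`. -/
def IsItv (l : ℕ → ℕ) (iSeq : ℕ → ℕ) (t : ℕ) (Δ : Set ℕ) : Prop :=
  (∃ h, 1 ≤ h ∧ 2 * h ≤ t ∧
      Δ = {i | (i = 0 ∨ 0 < mult l i) ∧ iSeq (2 * h) ≤ i ∧ i ≤ iSeq (2 * h - 1)}) ∨
  (∃ i, Even i ∧ (i = 0 ∨ 0 < mult l i) ∧ ¬ InRange iSeq t i ∧ Δ = {i})

/-- Intervals of a (special orthogonal, even) partition `l`. -/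
def IsItvO (l : ℕ → ℕ) (iSeq : ℕ → ℕ) (t : ℕ) (Δ : Set ℕ) : Prop :=
  (∃ h, 1 ≤ h ∧ 2 * h ≤ t ∧
      Δ = {i | 0 < mult l i ∧ iSeq (2 * h) ≤ i ∧ i ≤ iSeq (2 * h - 1)}) ∨
  (∃ i, Odd i ∧ 0 < mult l i ∧ ¬ InRange iSeq t i ∧ Δ = {i})

/-- `J(Δ)`: the set of indices `j ≥ 1` whose part lies in `Δ`. -/
def idxSet (l : ℕ → ℕ) (Δ : Set ℕ) : Set ℕ := {j | 1 ≤ j ∧ l j ∈ Δ}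

/-- Good parity at index `j`: `λ_{1,j}` even and `λ_{2,j}` odd. -/
def GoodIdx (l₁ l₂ : ℕ → ℕ) (j : ℕ) : Prop := Even (l₁ j) ∧ Odd (l₂ j)

/-- `J^+`: odd `j` of good parity with a strict decrease at `j-1 → j` for some `d`. -/
def Jplus (l₁ l₂ : ℕ → ℕ) : Set ℕ :=
  {j | Odd j ∧ GoodIdx l₁ l₂ j ∧ (j = 1 ∨ l₁ (j - 1) > l₁ j ∨ l₂ (j - 1) > l₂ j)}

/-- `J^-`: even `j` of good parity with a strict decrease at `j → j+1` for some `d`. -/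
def Jminus (l₁ l₂ : ℕ → ℕ) : Set ℕ :=
  {j | 2 ≤ j ∧ Even j ∧ GoodIdx l₁ l₂ j ∧ (l₁ j > l₁ (j + 1) ∨ l₂ j > l₂ (j + 1))}

/-- The sequence `ξ`: `1` on `J^+`, `-1` on `J^-`, `0` elsewhere. -/
def xiSeq (l₁ l₂ : ℕ → ℕ) (j : ℕ) : ℤ :=
  if j ∈ Jplus l₁ l₂ then 1 else if j ∈ Jminus l₁ l₂ then -1 else 0

/-- The endoscopic induction `λ = λ₁ + λ₂ + ξ` (termwise, truncated to ℕ). -/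
def indPart (l₁ l₂ : ℕ → ℕ) (j : ℕ) : ℕ := ((l₁ j : ℤ) + (l₂ j : ℤ) + xiSeq l₁ l₂ j).toNat

section Aux
variable {l₁ l₂ : ℕ → ℕ}

lemma good_pair (hs1 : IsSpecial l₁) (hs2 : IsSpecial l₂) {j : ℕ} (hj : Odd j) :
    GoodIdx l₁ l₂ j ↔ GoodIdx l₁ l₂ (j + 1) := by
  obtain ⟨c, rfl⟩ := hj
  have h1 := hs1 (c + 1) (by omega)
  have h2 := hs2 (c + 1) (by omega)
  have e1 : 2 * (c + 1) - 1 = 2 * c + 1 := by omega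
  have e2 : 2 * (c + 1) = 2 * c + 1 + 1 := by omega
  rw [e1, e2] at h1 h2
  unfold GoodIdx
  rw [Nat.even_iff, Nat.even_iff, Nat.odd_iff, Nat.odd_iff, h1, h2]

lemma nextMinus (hp1 : IsPartition l₁) (hp2 : IsPartition l₂) (hz2 : EventuallyZero l₂)
    (hs1 : IsSpecial l₁) (hs2 : IsSpecial l₂) {j : ℕ} (hj : Odd j) (hg : GoodIdx l₁ l₂ j) :
    ∃ m ∈ Jminus l₁ l₂, j < m ∧
      ∀ s, (s ∈ Jplus l₁ l₂ ∨ s ∈ Jminus l₁ l₂) → j < s → s < m → False := by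
  classical
  set D : Set ℕ := {m | Even m ∧ j < m ∧ (l₁ (m + 1) < l₁ m ∨ l₂ (m + 1) < l₂ m)} with hD
  have hj1 : 1 ≤ j := hj.pos
  have hDne : D.Nonempty := by
    by_contra hne
    rw [Set.not_nonempty_iff_eq_empty, Set.eq_empty_iff_forall_notMem] at hne
    have hall : ∀ k, GoodIdx l₁ l₂ (j + 2 * k) := by
      intro k
      induction k with
      | zero => simpa using hg
      | succ k ih =>
        have hodd : Odd (j + 2 * k) := by
          obtain ⟨c, hc⟩ := hj; exact ⟨c + k, by omega⟩
        have hgood1 : GoodIdx l₁ l₂ (j + 2 * k + 1) := (good_pair hs1 hs2 hodd).1 ih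
        have hmem : j + 2 * k + 1 ∉ D := fun h => hne _ h
        rw [hD] at hmem
        simp only [Set.mem_setOf_eq, not_and_or] at hmem
        have heven : Even (j + 2 * k + 1) := by
          obtain ⟨c, hc⟩ := hj; exact ⟨c + k + 1, by omega⟩
        have hlt : j < j + 2 * k + 1 := by omega
        have hnd : ¬(l₁ (j + 2 * k + 1 + 1) < l₁ (j + 2 * k + 1) ∨
            l₂ (j + 2 * k + 1 + 1) < l₂ (j + 2 * k + 1)) := by
          rcases hmem with h | h | h
          · exact absurd heven h
          · omega
          · exact h
        push_neg at hnd
        have h1 := hp1 (j + 2 * k + 1) (by omega)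
        have h2 := hp2 (j + 2 * k + 1) (by omega)
        have e1 : l₁ (j + 2 * k + 1 + 1) = l₁ (j + 2 * k + 1) := by omega
        have e2 : l₂ (j + 2 * k + 1 + 1) = l₂ (j + 2 * k + 1) := by omega
        have : j + 2 * (k + 1) = j + 2 * k + 1 + 1 := by omega
        rw [this]
        exact ⟨e1 ▸ hgood1.1, e2 ▸ hgood1.2⟩
    obtain ⟨N, hN⟩ := hz2
    have := (hall N).2
    rw [hN (j + 2 * N) (by omega)] at this
    exact (Nat.not_odd_iff_even.2 Even.zero) this
  set m := sInf D with hm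
  have hmD : m ∈ D := Nat.sInf_mem hDne
  have hmin : ∀ x, x < m → x ∉ D := fun x hx => Nat.notMem_of_lt_sInf hx
  obtain ⟨hmeven, hjm, hmdrop⟩ := hmD
  -- goodness propagates up to m
  have hgood : ∀ e, Even e → j < e → e ≤ m → GoodIdx l₁ l₂ e := by
    intro e
    induction e using Nat.strong_induction_on with
    | _ e ih =>
      intro he hje hem
      by_cases h1 : e = j + 1
      · subst h1; exact (good_pair hs1 hs2 hj).1 hg
      · have he3 : j + 3 ≤ e := by
          obtain ⟨c, hc⟩ := hj; obtain ⟨d, hd⟩ := he; omega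
        have he2 : Even (e - 2) := by
          obtain ⟨d, hd⟩ := he; exact ⟨d - 1, by omega⟩
        have hg2 : GoodIdx l₁ l₂ (e - 2) := ih (e - 2) (by omega) he2 (by omega) (by omega)
        have hnD : e - 2 ∉ D := hmin _ (by omega)
        rw [hD] at hnD
        simp only [Set.mem_setOf_eq, not_and_or] at hnD
        have hnd : ¬(l₁ (e - 2 + 1) < l₁ (e - 2) ∨ l₂ (e - 2 + 1) < l₂ (e - 2)) := by
          rcases hnD with h | h | h
          · exact absurd he2 h
          · omega
          · exact h
        push_neg at hnd
        have h1' := hp1 (e - 2) (by omega)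
        have h2' := hp2 (e - 2) (by omega)
        rw [show e - 2 + 1 = e - 1 from by omega] at hnd h1' h2'
        have e1 : l₁ (e - 1) = l₁ (e - 2) := by omega
        have e2 : l₂ (e - 1) = l₂ (e - 2) := by omega
        have hgood1 : GoodIdx l₁ l₂ (e - 1) := ⟨e1 ▸ hg2.1, e2 ▸ hg2.2⟩
        have hodd1 : Odd (e - 1) := by
          obtain ⟨d, hd⟩ := he; exact ⟨d - 1, by omega⟩
        have := (good_pair hs1 hs2 hodd1).1 hgood1
        have he' : e - 1 + 1 = e := by omega
        rwa [he'] at this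
  refine ⟨m, ⟨by omega, hmeven, hgood m hmeven hjm le_rfl, by omega⟩, hjm, ?_⟩
  intro s hs hjs hsm
  rcases hs with hs | hs
  · obtain ⟨hsodd, hsgood, hsd⟩ := hs
    have hs1' : s ≠ 1 := by omega
    have hsd' : l₁ (s - 1) > l₁ s ∨ l₂ (s - 1) > l₂ s := by tauto
    have : s - 1 ∈ D := by
      refine ⟨?_, ?_, ?_⟩
      · obtain ⟨c, hc⟩ := hsodd; exact ⟨c, by omega⟩
      · obtain ⟨c, hc⟩ := hsodd; obtain ⟨c', hc'⟩ := hj; omega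
      · have : s - 1 + 1 = s := by omega
        rw [this]; omega
    exact absurd this (hmin _ (by omega))
  · obtain ⟨hs2', hseven, hsgood, hsd⟩ := hs
    have : s ∈ D := ⟨hseven, hjs, by omega⟩
    exact absurd this (hmin _ hsm)

lemma prevPlus (hp1 : IsPartition l₁) (hp2 : IsPartition l₂)
    (hs1 : IsSpecial l₁) (hs2 : IsSpecial l₂) :
    ∀ e, Even e → 2 ≤ e → GoodIdx l₁ l₂ e →
    ∃ p ∈ Jplus l₁ l₂, p < e ∧
      ∀ s, (s ∈ Jplus l₁ l₂ ∨ s ∈ Jminus l₁ l₂) → p < s → s < e → False := by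
  intro e
  induction e using Nat.strong_induction_on with
  | _ e ih =>
    intro he he2 hg
    have hodd1 : Odd (e - 1) := by obtain ⟨d, hd⟩ := he; exact ⟨d - 1, by omega⟩
    have hgood1 : GoodIdx l₁ l₂ (e - 1) := by
      have := (good_pair hs1 hs2 hodd1 (l₁ := l₁) (l₂ := l₂))
      rw [show e - 1 + 1 = e from by omega] at this
      exact this.2 hg
    by_cases h2 : e = 2
    · subst h2
      exact ⟨1, ⟨odd_one, hgood1, Or.inl rfl⟩, by omega, fun s _ h1 h2 => by omega⟩
    · have he4 : 4 ≤ e := by obtain ⟨d, hd⟩ := he; omega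
      by_cases hd : l₁ (e - 1) < l₁ (e - 2) ∨ l₂ (e - 1) < l₂ (e - 2)
      · refine ⟨e - 1, ⟨hodd1, hgood1, Or.inr ?_⟩, by omega, fun s _ h1 h2 => by omega⟩
        rw [show e - 1 - 1 = e - 2 from by omega]
        exact hd
      · push_neg at hd
        have h1' := hp1 (e - 2) (by omega)
        have h2' := hp2 (e - 2) (by omega)
        rw [show e - 2 + 1 = e - 1 from by omega] at h1' h2'
        have e1 : l₁ (e - 1) = l₁ (e - 2) := by omega
        have e2 : l₂ (e - 1) = l₂ (e - 2) := by omega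
        have hg2 : GoodIdx l₁ l₂ (e - 2) := ⟨e1 ▸ hgood1.1, e2 ▸ hgood1.2⟩
        have he2' : Even (e - 2) := by obtain ⟨d, hd⟩ := he; exact ⟨d - 1, by omega⟩
        obtain ⟨p, hpP, hpe, hnos⟩ := ih (e - 2) (by omega) he2' (by omega) hg2
        refine ⟨p, hpP, by omega, fun s hs hps hse => ?_⟩
        by_cases hse2 : s < e - 2
        · exact hnos s hs hps hse2
        · have : s = e - 2 ∨ s = e - 1 := by omega
          rcases this with rfl | rfl
          · rcases hs with hs | hs
            · obtain ⟨d, hd⟩ := hs.1; obtain ⟨d', hd'⟩ := he2'; omega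
            · have := hs.2.2.2
              rw [show e - 2 + 1 = e - 1 from by omega] at this
              omega
          · rcases hs with hs | hs
            · have := hs.2.2
              rcases this with h | h
              · omega
              · rw [show e - 1 - 1 = e - 2 from by omega] at h
                omega
            · obtain ⟨d, hd⟩ := hs.2.1; obtain ⟨d', hd'⟩ := hodd1; omega

end Aux

lemma enum_filter_lt_card (s : Finset ℕ) {k : ℕ} (h : s.card = k) (i : Fin k) :
    (s.filter (fun y => y < s.orderEmbOfFin h i)).card = i := by
  classical
  have himg : s.filter (fun y => y < s.orderEmbOfFin h i)
      = (Finset.univ.filter (fun j : Fin k => j < i)).image (s.orderEmbOfFin h) := by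
    ext y
    simp only [Finset.mem_filter, Finset.mem_image, Finset.mem_univ, true_and]
    constructor
    · rintro ⟨hy, hlt⟩
      have hy' : y ∈ Set.range (s.orderEmbOfFin h) := by
        rw [Finset.range_orderEmbOfFin]; exact hy
      obtain ⟨j, hj⟩ := hy'
      refine ⟨j, ?_, hj⟩
      rw [← hj] at hlt
      exact (OrderEmbedding.lt_iff_lt _).1 hlt
    · rintro ⟨j, hji, rfl⟩
      exact ⟨Finset.orderEmbOfFin_mem s h j, (OrderEmbedding.lt_iff_lt _).2 hji⟩
  rw [himg, Finset.card_image_of_injective _ (s.orderEmbOfFin h).injective]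
  have : (Finset.univ.filter (fun j : Fin k => j < i)) = Finset.Iio i := by
    ext j; simp
  rw [this, Fin.card_Iio]

lemma enum_filter_le_card (s : Finset ℕ) {k : ℕ} (h : s.card = k) (i : Fin k) :
    (s.filter (fun y => y ≤ s.orderEmbOfFin h i)).card = i + 1 := by
  classical
  have hins : s.filter (fun y => y ≤ s.orderEmbOfFin h i)
      = insert (s.orderEmbOfFin h i) (s.filter (fun y => y < s.orderEmbOfFin h i)) := by
    ext y
    simp only [Finset.mem_filter, Finset.mem_insert]
    constructor
    · rintro ⟨hy, hle⟩
      rcases lt_or_eq_of_le hle with hlt | heq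
      · exact Or.inr ⟨hy, hlt⟩
      · exact Or.inl heq
    · rintro (rfl | ⟨hy, hlt⟩)
      · exact ⟨Finset.orderEmbOfFin_mem s h i, le_rfl⟩
      · exact ⟨hy, le_of_lt hlt⟩
  rw [hins, Finset.card_insert_of_notMem (by simp), enum_filter_lt_card]


/-- `|J^+| = |J^-|` and the elements interleave
`j⁺_1 < j⁻_1 < j⁺_2 < ... < j⁺_a < j⁻_a`. -/
theorem Jplus_Jminus_interlace (n₁ n₂ : ℕ) (l₁ l₂ : ℕ → ℕ)
    (hp1 : IsPartition l₁) (hz1 : EventuallyZero l₁) (hs1 : psum l₁ = 2 * n₁)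
    (hsymp1 : IsSymplectic l₁) (hspec1 : IsSpecial l₁)
    (hp2 : IsPartition l₂) (hz2 : EventuallyZero l₂) (hs2 : psum l₂ = 2 * n₂)
    (horth2 : IsOrthogonal l₂) (hspec2 : IsSpecial l₂) :
    ∃ (a : ℕ) (jp jm : ℕ → ℕ),
      Jplus l₁ l₂ = jp '' Set.Iio a ∧
      Jminus l₁ l₂ = jm '' Set.Iio a ∧
      (∀ i, i < a → jp i < jm i) ∧
      (∀ i, i + 1 < a → jm i < jp (i + 1)) := by
  classical
  obtain ⟨N, hN⟩ := hz2
  have hA : ∀ j ∈ Jplus l₁ l₂, ∃ m ∈ Jminus l₁ l₂, j < m ∧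
      ∀ s, (s ∈ Jplus l₁ l₂ ∨ s ∈ Jminus l₁ l₂) → j < s → s < m → False :=
    fun j hj => nextMinus hp1 hp2 ⟨N, hN⟩ hspec1 hspec2 hj.1 hj.2.1
  have hB : ∀ m ∈ Jminus l₁ l₂, ∃ p ∈ Jplus l₁ l₂, p < m ∧
      ∀ s, (s ∈ Jplus l₁ l₂ ∨ s ∈ Jminus l₁ l₂) → p < s → s < m → False :=
    fun m hm => prevPlus hp1 hp2 hspec1 hspec2 m hm.2.1 hm.1 hm.2.2.1
  -- boundedness
  have hbnd : ∀ j, (j ∈ Jplus l₁ l₂ ∨ j ∈ Jminus l₁ l₂) → j < N := by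
    intro j hj
    by_contra hge
    have h0 : l₂ j = 0 := hN j (by omega)
    have hodd : Odd (l₂ j) := by
      rcases hj with hj | hj
      · exact hj.2.1.2
      · exact hj.2.2.1.2
    rw [h0] at hodd
    exact (Nat.not_odd_iff_even.2 Even.zero) hodd
  set Pf : Finset ℕ := (Finset.range N).filter (· ∈ Jplus l₁ l₂) with hPfdef
  set Mf : Finset ℕ := (Finset.range N).filter (· ∈ Jminus l₁ l₂) with hMfdef
  have hPf : ∀ j, j ∈ Pf ↔ j ∈ Jplus l₁ l₂ := by
    intro j
    simp only [hPfdef, Finset.mem_filter, Finset.mem_range]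
    exact ⟨fun h => h.2, fun h => ⟨hbnd j (Or.inl h), h⟩⟩
  have hMf : ∀ j, j ∈ Mf ↔ j ∈ Jminus l₁ l₂ := by
    intro j
    simp only [hMfdef, Finset.mem_filter, Finset.mem_range]
    exact ⟨fun h => h.2, fun h => ⟨hbnd j (Or.inr h), h⟩⟩
  have hPodd : ∀ j ∈ Pf, Odd j := fun j hj => ((hPf j).1 hj).1
  have hMeven : ∀ j ∈ Mf, Even j := fun j hj => ((hMf j).1 hj).2.1
  -- choice functions
  set prev : ℕ → ℕ := fun m => if h : m ∈ Jminus l₁ l₂ then (hB m h).choose else 0 with hprevdef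
  have hprev : ∀ m, (hm : m ∈ Jminus l₁ l₂) → prev m ∈ Jplus l₁ l₂ ∧ prev m < m ∧
      ∀ s, (s ∈ Jplus l₁ l₂ ∨ s ∈ Jminus l₁ l₂) → prev m < s → s < m → False := by
    intro m hm
    have := (hB m hm).choose_spec
    simp only [hprevdef, dif_pos hm]
    exact ⟨this.1, this.2.1, this.2.2⟩
  set nxt : ℕ → ℕ := fun p => if h : p ∈ Jplus l₁ l₂ then (hA p h).choose else 0 with hnxtdef
  have hnxt : ∀ p, (hp : p ∈ Jplus l₁ l₂) → nxt p ∈ Jminus l₁ l₂ ∧ p < nxt p ∧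
      ∀ s, (s ∈ Jplus l₁ l₂ ∨ s ∈ Jminus l₁ l₂) → p < s → s < nxt p → False := by
    intro p hp
    have := (hA p hp).choose_spec
    simp only [hnxtdef, dif_pos hp]
    exact ⟨this.1, this.2.1, this.2.2⟩
  -- strict monotonicity of prev on M
  have hprevmono : ∀ m m', m ∈ Jminus l₁ l₂ → m' ∈ Jminus l₁ l₂ → m < m' → prev m < prev m' := by
    intro m m' hm hm' hlt
    obtain ⟨hp', hlt', hnos'⟩ := hprev m' hm'
    have hge : ¬ prev m' < m := fun hc => hnos' m (Or.inr hm) hc hlt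
    have := (hprev m hm).2.1
    omega
  have hnxtmono : ∀ p p', p ∈ Jplus l₁ l₂ → p' ∈ Jplus l₁ l₂ → p < p' → nxt p < nxt p' := by
    intro p p' hp hp' hlt
    obtain ⟨hm, hltp, hnos⟩ := hnxt p hp
    have hge : ¬ p' < nxt p := fun hc => hnos p' (Or.inl hp') hlt hc
    have := (hnxt p' hp').2.1
    omega
  have hprevinj : ∀ (s : Finset ℕ), (∀ x ∈ s, x ∈ Jminus l₁ l₂) → Set.InjOn prev s := by
    intro s hs x hx y hy hxy
    rcases lt_trichotomy x y with h | h | h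
    · exact absurd hxy (ne_of_lt (hprevmono x y (hs x hx) (hs y hy) h))
    · exact h
    · exact absurd hxy.symm (ne_of_lt (hprevmono y x (hs y hy) (hs x hx) h))
  -- (I): prefix counts, minus ≤ plus
  have hI : ∀ x : ℕ, (Mf.filter (· ≤ x)).card ≤ (Pf.filter (· ≤ x)).card := by
    intro x
    apply Finset.card_le_card_of_injOn prev
    · intro m hm
      simp only [Finset.mem_coe, Finset.mem_filter] at hm ⊢
      obtain ⟨hmM, hmx⟩ := hm
      obtain ⟨h1, h2, _⟩ := hprev m ((hMf m).1 hmM)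
      exact ⟨(hPf _).2 h1, by omega⟩
    · exact hprevinj _ (fun y hy => (hMf y).1 (Finset.mem_filter.1 hy).1)
  -- cardinality equality
  have hMleP : Mf.card ≤ Pf.card := by
    apply Finset.card_le_card_of_injOn prev
    · intro m hm
      exact (hPf _).2 (hprev m ((hMf m).1 hm)).1
    · exact hprevinj _ (fun y hy => (hMf y).1 hy)
  have hPleM : Pf.card ≤ Mf.card := by
    apply Finset.card_le_card_of_injOn nxt
    · intro p hp
      exact (hMf _).2 (hnxt p ((hPf p).1 hp)).1
    · intro x hx y hy hxy
      rcases lt_trichotomy x y with h | h | h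
      · exact absurd hxy (ne_of_lt (hnxtmono x y ((hPf x).1 hx) ((hPf y).1 hy) h))
      · exact h
      · exact absurd hxy.symm (ne_of_lt (hnxtmono y x ((hPf y).1 hy) ((hPf x).1 hx) h))
  -- largest sign below, for (II)
  set T : ℕ → Finset ℕ := fun p => (Pf ∪ Mf).filter (· < p) with hTdef
  set pv : ℕ → ℕ := fun p => if h : (T p).Nonempty then (T p).max' h else 0 with hpvdef
  have hTmem : ∀ q y, y ∈ T q ↔ (y ∈ Pf ∨ y ∈ Mf) ∧ y < q := by
    intro q y
    simp [hTdef, Finset.mem_filter, Finset.mem_union]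
  have hpv : ∀ p, p ∈ Jplus l₁ l₂ → (T p).Nonempty → pv p ∈ Mf ∧ pv p < p := by
    intro p hp h
    obtain ⟨hmem, hltp⟩ := (hTmem p _).1 ((T p).max'_mem h)
    have hpv_eq : pv p = (T p).max' h := dif_pos h
    rcases hmem with hmem | hmem
    · exfalso
      have hsP : (T p).max' h ∈ Jplus l₁ l₂ := (hPf _).1 hmem
      obtain ⟨hmM, hltm, hnos⟩ := hnxt _ hsP
      have hge : ¬ p < nxt ((T p).max' h) := fun hc => hnos p (Or.inl hp) hltp hc
      have hne : nxt ((T p).max' h) ≠ p := by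
        intro he
        have h1 : Even (nxt ((T p).max' h)) := hmM.2.1
        have h2 : Odd p := hp.1
        rw [he] at h1
        rw [Nat.even_iff] at h1; rw [Nat.odd_iff] at h2; omega
      have hmemT : nxt ((T p).max' h) ∈ T p :=
        (hTmem p _).2 ⟨Or.inr ((hMf _).2 hmM), by omega⟩
      have := (T p).le_max' _ hmemT
      omega
    · rw [hpv_eq]; exact ⟨hmem, hltp⟩
  -- (II)
  have hII : ∀ x : ℕ, (Pf.filter (· ≤ x)).card ≤ (Mf.filter (· ≤ x)).card + 1 := by
    intro x
    have hsplit := Finset.card_filter_add_card_filter_not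
      (s := Pf.filter (· ≤ x)) (p := fun p => (T p).Nonempty)
    have hcardA : ((Pf.filter (· ≤ x)).filter (fun p => (T p).Nonempty)).card
        ≤ (Mf.filter (· ≤ x)).card := by
      apply Finset.card_le_card_of_injOn pv
      · intro p hp
        simp only [Finset.mem_coe, Finset.mem_filter] at hp
        obtain ⟨⟨hpP, hpx⟩, hTne⟩ := hp
        obtain ⟨h1, h2⟩ := hpv p ((hPf p).1 hpP) hTne
        simp only [Finset.mem_coe, Finset.mem_filter]
        exact ⟨h1, by omega⟩
      · have hmono : ∀ p p', p ∈ (Pf.filter (· ≤ x)).filter (fun p => (T p).Nonempty) →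
            p' ∈ (Pf.filter (· ≤ x)).filter (fun p => (T p).Nonempty) → p < p' → pv p < pv p' := by
          intro p p' hp hp' hlt
          simp only [Finset.mem_filter] at hp hp'
          have h1 : pv p < p := (hpv p ((hPf p).1 hp.1.1) hp.2).2
          have hmemT : p ∈ T p' := (hTmem p' p).2 ⟨Or.inl hp.1.1, hlt⟩
          have h2 : p ≤ pv p' := by
            have := (T p').le_max' p hmemT
            rw [hpvdef]
            simp only [dif_pos hp'.2]
            exact this
          omega
        intro x1 hx1 y1 hy1 hxy
        rcases lt_trichotomy x1 y1 with h | h | h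
        · exact absurd hxy (ne_of_lt (hmono x1 y1 hx1 hy1 h))
        · exact h
        · exact absurd hxy.symm (ne_of_lt (hmono y1 x1 hy1 hx1 h))
    have hcardB : ((Pf.filter (· ≤ x)).filter (fun p => ¬ (T p).Nonempty)).card ≤ 1 := by
      rw [Finset.card_le_one]
      intro p hp p' hp'
      simp only [Finset.mem_filter] at hp hp'
      by_contra hne
      rcases lt_trichotomy p p' with h | h | h
      · exact hp'.2 ⟨p, (hTmem p' p).2 ⟨Or.inl hp.1.1, h⟩⟩
      · exact hne h
      · exact hp.2 ⟨p', (hTmem p p').2 ⟨Or.inl hp'.1.1, h⟩⟩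
    omega
  -- the enumerations
  set a := Pf.card with ha
  have hMc : Mf.card = a := le_antisymm hMleP hPleM
  set f := Pf.orderEmbOfFin ha.symm with hf
  set g := Mf.orderEmbOfFin hMc with hg
  set jp : ℕ → ℕ := fun i => if h : i < a then f ⟨i, h⟩ else 0 with hjp
  set jm : ℕ → ℕ := fun i => if h : i < a then g ⟨i, h⟩ else 0 with hjm
  refine ⟨a, jp, jm, ?_, ?_, ?_, ?_⟩
  · ext y
    simp only [Set.mem_image, Set.mem_Iio]
    constructor
    · intro hy
      have : y ∈ Pf := (hPf y).2 hy
      have : y ∈ Set.range f := by rw [hf, Finset.range_orderEmbOfFin]; exact this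
      obtain ⟨i, hi⟩ := this
      exact ⟨i.1, i.2, by simp only [hjp, dif_pos i.2]; rw [← hi]⟩
    · rintro ⟨i, hia, rfl⟩
      simp only [hjp, dif_pos hia]
      exact (hPf _).1 (Finset.orderEmbOfFin_mem _ _ _)
  · ext y
    simp only [Set.mem_image, Set.mem_Iio]
    constructor
    · intro hy
      have : y ∈ Mf := (hMf y).2 hy
      have : y ∈ Set.range g := by rw [hg, Finset.range_orderEmbOfFin]; exact this
      obtain ⟨i, hi⟩ := this
      exact ⟨i.1, i.2, by simp only [hjm, dif_pos i.2]; rw [← hi]⟩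
    · rintro ⟨i, hia, rfl⟩
      simp only [hjm, dif_pos hia]
      exact (hMf _).1 (Finset.orderEmbOfFin_mem _ _ _)
  · -- jp i < jm i
    intro i hia
    by_contra hc
    push_neg at hc
    simp only [hjp, hjm, dif_pos hia] at hc ⊢
    set x := g ⟨i, hia⟩ with hx
    have hcnt1 : (Mf.filter (· ≤ x)).card = i + 1 := enum_filter_le_card Mf hMc ⟨i, hia⟩
    have hxM : x ∈ Mf := Finset.orderEmbOfFin_mem _ _ _
    have hfP : f ⟨i, hia⟩ ∈ Pf := Finset.orderEmbOfFin_mem _ _ _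
    have hxeven := hMeven x hxM
    have hfodd := hPodd _ hfP
    have hsub : Pf.filter (· ≤ x) ⊆ Pf.filter (· < f ⟨i, hia⟩) := by
      intro y hy
      simp only [Finset.mem_filter] at hy ⊢
      refine ⟨hy.1, ?_⟩
      have hyodd := hPodd y hy.1
      rw [Nat.even_iff] at hxeven; rw [Nat.odd_iff] at hyodd
      omega
    have hcnt2 : (Pf.filter (fun y => y < f ⟨i, hia⟩)).card = i :=
      enum_filter_lt_card Pf ha.symm ⟨i, hia⟩
    have := hI x
    have := Finset.card_le_card hsub
    omega
  · -- jm i < jp (i+1)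
    intro i hia
    by_contra hc
    push_neg at hc
    have hia' : i < a := by omega
    simp only [hjp, hjm, dif_pos hia, dif_pos hia'] at hc ⊢
    set x := f ⟨i + 1, hia⟩ with hx
    have hcnt1 : (Pf.filter (· ≤ x)).card = i + 2 := enum_filter_le_card Pf ha.symm ⟨i + 1, hia⟩
    have hxP : x ∈ Pf := Finset.orderEmbOfFin_mem _ _ _
    have hgM : g ⟨i, hia'⟩ ∈ Mf := Finset.orderEmbOfFin_mem _ _ _
    have hxodd := hPodd x hxP
    have hsub : Mf.filter (· ≤ x) ⊆ Mf.filter (· < g ⟨i, hia'⟩) := by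
      intro y hy
      simp only [Finset.mem_filter] at hy ⊢
      refine ⟨hy.1, ?_⟩
      have hyeven := hMeven y hy.1
      rw [Nat.odd_iff] at hxodd; rw [Nat.even_iff] at hyeven
      omega
    have hcnt2 : (Mf.filter (fun y => y < g ⟨i, hia'⟩)).card = i :=
      enum_filter_lt_card Mf hMc ⟨i, hia'⟩
    have := hII x
    have := Finset.card_le_card hsub
    omega
end
end

section
/- Let λ₁ be a special symplectic partition of 2n₁ and λ₂ a special orthogonal partition of 2n₂ with n₁ + n₂ = n. Let ξ be the sequence equal to 1 on J^+, −1 on J^-, and 0 elsewhere (J^± defined from λ₁, λ₂ as in the endoscopic induction). Then λ = λ₁ + λ₂ + ξ (termwise) is a symplectic partition of 2n. -/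
open Classical

noncomputable section

/-! ### Auxiliary lemmas -/

lemma part_anti {l : ℕ → ℕ} (hp : IsPartition l) {j j' : ℕ} (h1 : 1 ≤ j) (h2 : j ≤ j') :
    l j' ≤ l j := by
  induction j' with
  | zero => omega
  | succ n ih =>
    rcases Nat.lt_or_ge j (n + 1) with h | h
    · exact le_trans (hp n (by omega)) (ih (by omega))
    · have : j = n + 1 := by omega
      rw [this]

/-- Level sets of a partition are intervals. -/
lemma level_interval {l : ℕ → ℕ} (hp : IsPartition l) (hz : EventuallyZero l) {i : ℕ}
    (hi : 0 < i) {j₀ : ℕ} (hj₀ : 1 ≤ j₀) (hl : l j₀ = i) :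
    ∃ a b, 1 ≤ a ∧ a ≤ b ∧ {j | 1 ≤ j ∧ l j = i} = Set.Icc a b := by
  obtain ⟨N, hN⟩ := hz
  set S : Set ℕ := {j | 1 ≤ j ∧ l j = i} with hSdef
  have hj₀S : j₀ ∈ S := ⟨hj₀, hl⟩
  have hBdd : ∀ j ∈ S, j ≤ N := by
    intro j hj
    by_contra h
    have := hN j (by omega)
    have := hj.2
    omega
  have hne : S.Nonempty := ⟨j₀, hj₀S⟩
  have hBdd' : BddAbove S := ⟨N, fun j hj => hBdd j hj⟩
  refine ⟨sInf S, sSup S, (Nat.sInf_mem hne).1,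
    le_trans (Nat.sInf_le hj₀S) (le_csSup hBdd' hj₀S), ?_⟩
  · ext j
    constructor
    · intro hj
      exact ⟨Nat.sInf_le hj, le_csSup hBdd' hj⟩
    · intro hj
      have haS := Nat.sInf_mem hne
      have hbS := Nat.sSup_mem hne hBdd'
      have h1 : 1 ≤ j := le_trans haS.1 hj.1
      have h2 : l j ≤ i := by
        have := part_anti hp haS.1 hj.1
        rw [haS.2] at this; exact this
      have h3 : i ≤ l j := by
        have := part_anti hp h1 hj.2
        rw [hbS.2] at this; exact this
      exact ⟨h1, by omega⟩

lemma mult_eq_of_Icc {l : ℕ → ℕ} {i a b : ℕ}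
    (hS : {j | 1 ≤ j ∧ l j = i} = Set.Icc a b) : mult l i = b + 1 - a := by
  rw [mult, hS, ← Finset.coe_Icc, Nat.card_coe_set_eq, Set.ncard_coe_finset, Nat.card_Icc]

/-- Pairing lemma: for a special partition in which every `P`-part has even
multiplicity, consecutive paired entries with a `P`-value are equal. -/
lemma pair_lemma {l : ℕ → ℕ} (hp : IsPartition l) (hz : EventuallyZero l) (hspec : IsSpecial l)
    {P : ℕ → Prop} (hpos : ∀ v, P v → 0 < v) (hmult : ∀ v, P v → Even (mult l v))
    (hpar : ∀ x y, x % 2 = y % 2 → P y → y < x → P x) :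
    ∀ k, 1 ≤ k → P (l (2 * k - 1)) → l (2 * k) = l (2 * k - 1) := by
  intro k
  induction k using Nat.strong_induction_on with
  | _ k ih =>
    intro hk hP
    by_contra hne
    have hmono : l (2 * k) ≤ l (2 * k - 1) := by
      have := hp (2 * k - 1) (by omega)
      rwa [show 2 * k - 1 + 1 = 2 * k by omega] at this
    have hlt : l (2 * k) < l (2 * k - 1) := lt_of_le_of_ne hmono hne
    set v := l (2 * k - 1) with hv
    have hvpos : 0 < v := hpos _ hP
    obtain ⟨a, b, ha1, hab, hS⟩ := level_interval hp hz hvpos (j₀ := 2 * k - 1) (by omega) rfl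
    have hmem : (2 * k - 1) ∈ Set.Icc a b := by
      rw [← hS]; exact ⟨by omega, rfl⟩
    have hb : b = 2 * k - 1 := by
      by_contra h
      have hbmem : b ∈ {j | 1 ≤ j ∧ l j = v} := by rw [hS]; exact ⟨hab, le_refl b⟩
      have hble : 2 * k ≤ b := by
        have := hmem.2; omega
      have := part_anti hp (show 1 ≤ 2 * k by omega) hble
      have := hbmem.2
      omega
    have hmult' := hmult v hP
    have hcard : mult l v = b + 1 - a := mult_eq_of_Icc hS
    have haeven : a % 2 = 0 := by
      rw [hcard, hb] at hmult'
      rw [Nat.even_iff] at hmult'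
      have := hmem.1
      omega
    have ha2 : 2 ≤ a := by omega
    set m := a / 2 with hm
    have ham : a = 2 * m := by omega
    have hm1 : 1 ≤ m := by omega
    have hmk : m < k := by
      have := hmem.1; omega
    have haS : l a = v := by
      have : a ∈ {j | 1 ≤ j ∧ l j = v} := by rw [hS]; exact ⟨le_refl a, hab⟩
      exact this.2
    have hgt : v < l (2 * m - 1) := by
      have hle : l a ≤ l (2 * m - 1) := part_anti hp (by omega) (by omega)
      have hnotmem : (2 * m - 1) ∉ Set.Icc a b := by
        intro hmem'
        have := hmem'.1; omega
      rw [← hS] at hnotmem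
      have hne' : l (2 * m - 1) ≠ v := fun h => hnotmem ⟨by omega, h⟩
      omega
    have h2m : l (2 * m) = v := by rw [← ham]; exact haS
    have hparity : l (2 * m - 1) % 2 = v % 2 := by
      have := hspec m hm1
      omega
    have hPm : P (l (2 * m - 1)) := hpar _ v hparity hP hgt
    have heq := ih m hmk hm1 hPm
    omega

lemma pair_lemma' {l : ℕ → ℕ} (hp : IsPartition l) (hz : EventuallyZero l) (hspec : IsSpecial l)
    {P : ℕ → Prop} (hpos : ∀ v, P v → 0 < v) (hmult : ∀ v, P v → Even (mult l v))
    (hpar : ∀ x y, x % 2 = y % 2 → P y → y < x → P x) :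
    ∀ k, 1 ≤ k → P (l (2 * k)) → l (2 * k) = l (2 * k - 1) := by
  intro k hk hP
  have hmono : l (2 * k) ≤ l (2 * k - 1) := by
    have := hp (2 * k - 1) (by omega)
    rwa [show 2 * k - 1 + 1 = 2 * k by omega] at this
  rcases eq_or_lt_of_le hmono with h | h
  · exact h
  · have hparity : l (2 * k - 1) % 2 = l (2 * k) % 2 := hspec k hk
    exact pair_lemma hp hz hspec hpos hmult hpar k hk (hpar _ _ hparity hP h)

lemma odd_hpar : ∀ x y : ℕ, x % 2 = y % 2 → Odd y → y < x → Odd x := by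
  intro x y h hy _
  rw [Nat.odd_iff] at *
  omega

lemma odd_hpos : ∀ v : ℕ, Odd v → 0 < v := by
  intro v hv; rw [Nat.odd_iff] at hv; omega

lemma evenpos_hpar : ∀ x y : ℕ, x % 2 = y % 2 → (Even y ∧ 0 < y) → y < x → Even x ∧ 0 < x := by
  intro x y h hy hlt
  rw [Nat.even_iff] at *
  constructor
  · omega
  · omega

lemma evenpos_hpos : ∀ v : ℕ, (Even v ∧ 0 < v) → 0 < v := fun _ h => h.2

/-! ### Facts about `xiSeq` -/

lemma xi_cases (l₁ l₂ : ℕ → ℕ) (j : ℕ) :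
    xiSeq l₁ l₂ j = 0 ∨ (xiSeq l₁ l₂ j = 1 ∧ j ∈ Jplus l₁ l₂) ∨
      (xiSeq l₁ l₂ j = -1 ∧ j ∈ Jminus l₁ l₂) := by
  unfold xiSeq
  split_ifs with h1 h2 <;> tauto

lemma xi_zero_of_not_good {l₁ l₂ : ℕ → ℕ} {j : ℕ} (h : ¬ GoodIdx l₁ l₂ j) :
    xiSeq l₁ l₂ j = 0 := by
  unfold xiSeq
  rw [if_neg (fun hj => h hj.2.1), if_neg (fun hj => h hj.2.2.1)]

lemma xi_eq_one {l₁ l₂ : ℕ → ℕ} {j : ℕ} (h : j ∈ Jplus l₁ l₂) : xiSeq l₁ l₂ j = 1 := by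
  unfold xiSeq; rw [if_pos h]

lemma xi_eq_negone {l₁ l₂ : ℕ → ℕ} {j : ℕ} (h : j ∈ Jminus l₁ l₂) (h' : j ∉ Jplus l₁ l₂) :
    xiSeq l₁ l₂ j = -1 := by
  unfold xiSeq; rw [if_neg h', if_pos h]

lemma not_jplus_of_even {l₁ l₂ : ℕ → ℕ} {j : ℕ} (h : j % 2 = 0) : j ∉ Jplus l₁ l₂ := by
  intro hj
  have := hj.1
  rw [Nat.odd_iff] at this
  omega

lemma not_jminus_of_odd {l₁ l₂ : ℕ → ℕ} {j : ℕ} (h : j % 2 = 1) : j ∉ Jminus l₁ l₂ := by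
  intro hj
  have := hj.2.1
  rw [Nat.even_iff] at this
  omega

lemma xi_nonneg_aux {l₁ l₂ : ℕ → ℕ} (j : ℕ) (hj : 1 ≤ j) :
    0 ≤ (l₁ j : ℤ) + (l₂ j : ℤ) + xiSeq l₁ l₂ j := by
  rcases xi_cases l₁ l₂ j with h | ⟨h, _⟩ | ⟨h, hm⟩
  · rw [h]; positivity
  · rw [h]; positivity
  · rw [h]
    have : Odd (l₂ j) := hm.2.2.1.2
    rw [Nat.odd_iff] at this
    omega

lemma indPart_cast {l₁ l₂ : ℕ → ℕ} (j : ℕ) (hj : 1 ≤ j) :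
    (indPart l₁ l₂ j : ℤ) = (l₁ j : ℤ) + (l₂ j : ℤ) + xiSeq l₁ l₂ j := by
  rw [indPart, Int.toNat_of_nonneg (xi_nonneg_aux j hj)]

lemma sum_pair (f : ℕ → ℤ) (K : ℕ) :
    ∑ j ∈ Finset.range (2 * K), f (j + 1) =
      ∑ k ∈ Finset.range K, (f (2 * k + 1) + f (2 * k + 2)) := by
  induction K with
  | zero => simp
  | succ n ih =>
    rw [Finset.sum_range_succ, ← ih, show 2 * (n + 1) = (2 * n + 1) + 1 by ring,
      Finset.sum_range_succ, Finset.sum_range_succ]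
    ring

lemma xi_eq_zero' {l₁ l₂ : ℕ → ℕ} {j : ℕ} (h1 : j ∉ Jplus l₁ l₂) (h2 : j ∉ Jminus l₁ l₂) :
    xiSeq l₁ l₂ j = 0 := by
  unfold xiSeq; rw [if_neg h1, if_neg h2]

/-- Indicator condition: pair `k` is of good parity and "continues" pair `k-1`. -/
def Hcond (l₁ l₂ : ℕ → ℕ) (k : ℕ) : Prop :=
  GoodIdx l₁ l₂ (2 * k - 1) ∧ 2 ≤ k ∧ l₁ (2 * k - 2) = l₁ (2 * k - 1) ∧
    l₂ (2 * k - 2) = l₂ (2 * k - 1)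

def Hfun (l₁ l₂ : ℕ → ℕ) (k : ℕ) : ℤ := if Hcond l₁ l₂ k then 1 else 0

lemma good_iff_pair {l₁ l₂ : ℕ → ℕ} (hspec1 : IsSpecial l₁) (hspec2 : IsSpecial l₂)
    {k : ℕ} (hk : 1 ≤ k) : GoodIdx l₁ l₂ (2 * k - 1) ↔ GoodIdx l₁ l₂ (2 * k) := by
  unfold GoodIdx
  rw [Nat.even_iff, Nat.even_iff, Nat.odd_iff, Nat.odd_iff]
  have h1 := hspec1 k hk
  have h2 := hspec2 k hk
  omega

lemma xi_pair_sum {l₁ l₂ : ℕ → ℕ} (hp1 : IsPartition l₁) (hp2 : IsPartition l₂)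
    (hspec1 : IsSpecial l₁) (hspec2 : IsSpecial l₂) {k : ℕ} (hk : 1 ≤ k) :
    xiSeq l₁ l₂ (2 * k - 1) + xiSeq l₁ l₂ (2 * k) = Hfun l₁ l₂ (k + 1) - Hfun l₁ l₂ k := by
  have hodd : (2 * k - 1) % 2 = 1 := by omega
  have hidx1 : 2 * (k + 1) - 1 = 2 * k + 1 := by omega
  have hidx2 : 2 * (k + 1) - 2 = 2 * k := by omega
  by_cases hg : GoodIdx l₁ l₂ (2 * k - 1)
  · have hg2 : GoodIdx l₁ l₂ (2 * k) := (good_iff_pair hspec1 hspec2 hk).mp hg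
    have h1 : xiSeq l₁ l₂ (2 * k - 1) = 1 - Hfun l₁ l₂ k := by
      by_cases hH : Hcond l₁ l₂ k
      · have hnp : (2 * k - 1) ∉ Jplus l₁ l₂ := by
          intro hj
          rcases hj.2.2 with h | h | h
          · have := hH.2.1; omega
          · rw [show 2 * k - 1 - 1 = 2 * k - 2 by omega] at h
            have := hH.2.2.1; omega
          · rw [show 2 * k - 1 - 1 = 2 * k - 2 by omega] at h
            have := hH.2.2.2; omega
        rw [xi_eq_zero' hnp (not_jminus_of_odd hodd), Hfun, if_pos hH]; norm_num
      · have hmem : (2 * k - 1) ∈ Jplus l₁ l₂ := by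
          refine ⟨Nat.odd_iff.mpr hodd, hg, ?_⟩
          by_cases hk1 : k = 1
          · left; omega
          · have hk2 : 2 ≤ k := by omega
            have hne : ¬(l₁ (2 * k - 2) = l₁ (2 * k - 1) ∧ l₂ (2 * k - 2) = l₂ (2 * k - 1)) :=
              fun h => hH ⟨hg, hk2, h.1, h.2⟩
            have hm1 : l₁ (2 * k - 1) ≤ l₁ (2 * k - 2) := by
              have := hp1 (2 * k - 2) (by omega)
              rwa [show 2 * k - 2 + 1 = 2 * k - 1 by omega] at this
            have hm2 : l₂ (2 * k - 1) ≤ l₂ (2 * k - 2) := by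
              have := hp2 (2 * k - 2) (by omega)
              rwa [show 2 * k - 2 + 1 = 2 * k - 1 by omega] at this
            rw [show 2 * k - 1 - 1 = 2 * k - 2 by omega]
            by_cases he1 : l₁ (2 * k - 2) = l₁ (2 * k - 1)
            · right; right; omega
            · right; left; omega
        rw [xi_eq_one hmem, Hfun, if_neg hH]; norm_num
    have h2 : xiSeq l₁ l₂ (2 * k) = Hfun l₁ l₂ (k + 1) - 1 := by
      have hnp : (2 * k) ∉ Jplus l₁ l₂ := not_jplus_of_even (by omega)
      by_cases he : l₁ (2 * k) = l₁ (2 * k + 1) ∧ l₂ (2 * k) = l₂ (2 * k + 1)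
      · have hg3 : GoodIdx l₁ l₂ (2 * k + 1) := by
          unfold GoodIdx at *
          rw [← he.1, ← he.2]; exact hg2
        have hH : Hcond l₁ l₂ (k + 1) := by
          refine ⟨?_, by omega, ?_, ?_⟩
          · rw [hidx1]; exact hg3
          · rw [hidx1, hidx2]; exact he.1
          · rw [hidx1, hidx2]; exact he.2
        have hnm : (2 * k) ∉ Jminus l₁ l₂ := by
          intro hj
          have he1 := he.1
          have he2 := he.2
          rcases hj.2.2.2 with h | h <;> omega
        rw [xi_eq_zero' hnp hnm, Hfun, if_pos hH]; norm_num
      · have hm1 : l₁ (2 * k + 1) ≤ l₁ (2 * k) := hp1 (2 * k) (by omega)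
        have hm2 : l₂ (2 * k + 1) ≤ l₂ (2 * k) := hp2 (2 * k) (by omega)
        have hdec : l₁ (2 * k) > l₁ (2 * k + 1) ∨ l₂ (2 * k) > l₂ (2 * k + 1) := by
          by_cases he1 : l₁ (2 * k) = l₁ (2 * k + 1)
          · right
            have : ¬ l₂ (2 * k) = l₂ (2 * k + 1) := fun h => he ⟨he1, h⟩
            omega
          · left; omega
        have hmem : (2 * k) ∈ Jminus l₁ l₂ := ⟨by omega, even_two_mul k, hg2, hdec⟩
        have hHn : ¬ Hcond l₁ l₂ (k + 1) := by
          intro hH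
          have e1 := hH.2.2.1
          have e2 := hH.2.2.2
          rw [hidx1, hidx2] at e1 e2
          exact he ⟨e1, e2⟩
        rw [xi_eq_negone hmem hnp, Hfun, if_neg hHn]; norm_num
    rw [h1, h2]; ring
  · have hg2 : ¬ GoodIdx l₁ l₂ (2 * k) := fun h => hg ((good_iff_pair hspec1 hspec2 hk).mpr h)
    have hx1 : xiSeq l₁ l₂ (2 * k - 1) = 0 := xi_zero_of_not_good hg
    have hx2 : xiSeq l₁ l₂ (2 * k) = 0 := xi_zero_of_not_good hg2
    have hH1 : Hfun l₁ l₂ k = 0 := by rw [Hfun, if_neg (fun h => hg h.1)]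
    have hH2 : Hfun l₁ l₂ (k + 1) = 0 := by
      rw [Hfun, if_neg]
      intro hH
      have hgn := hH.1
      have e1 := hH.2.2.1
      have e2 := hH.2.2.2
      rw [hidx1] at hgn
      rw [hidx1, hidx2] at e1 e2
      apply hg2
      exact ⟨by rw [e1]; exact hgn.1, by rw [e2]; exact hgn.2⟩
    rw [hx1, hx2, hH1, hH2]; ring

lemma xi_sum_zero {l₁ l₂ : ℕ → ℕ} (hp1 : IsPartition l₁) (hp2 : IsPartition l₂)
    (hspec1 : IsSpecial l₁) (hspec2 : IsSpecial l₂) {K N₂ : ℕ}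
    (hz2 : ∀ j, N₂ ≤ j → l₂ j = 0) (hK : N₂ ≤ 2 * K + 1) :
    ∑ j ∈ Finset.range (2 * K), xiSeq l₁ l₂ (j + 1) = 0 := by
  rw [sum_pair]
  have hcongr : ∀ k ∈ Finset.range K,
      xiSeq l₁ l₂ (2 * k + 1) + xiSeq l₁ l₂ (2 * k + 2) =
        (fun m => Hfun l₁ l₂ (m + 1)) (k + 1) - (fun m => Hfun l₁ l₂ (m + 1)) k := by
    intro k _
    have := xi_pair_sum hp1 hp2 hspec1 hspec2 (k := k + 1) (by omega)
    rw [show 2 * (k + 1) - 1 = 2 * k + 1 by omega, show 2 * (k + 1) = 2 * k + 2 by omega] at this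
    simpa using this
  rw [Finset.sum_congr rfl hcongr, Finset.sum_range_sub (f := fun m => Hfun l₁ l₂ (m + 1))]
  have h1 : Hfun l₁ l₂ (0 + 1) = 0 := by
    rw [Hfun, if_neg]
    intro h
    have := h.2.1
    omega
  have h2 : Hfun l₁ l₂ (K + 1) = 0 := by
    rw [Hfun, if_neg]
    intro h
    have hgd := h.1.2
    rw [hz2 (2 * (K + 1) - 1) (by omega)] at hgd
    rw [Nat.odd_iff] at hgd
    omega
  rw [h1, h2]; ring

/-- the endoscopic induction `λ = λ₁ + λ₂ + ξ` is a symplectic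
partition of `2n`. -/
theorem endoscopic_induction_symplectic (n n₁ n₂ : ℕ) (hn : n₁ + n₂ = n)
    (l₁ l₂ : ℕ → ℕ)
    (hp1 : IsPartition l₁) (hz1 : EventuallyZero l₁) (hs1 : psum l₁ = 2 * n₁)
    (hsymp1 : IsSymplectic l₁) (hspec1 : IsSpecial l₁)
    (hp2 : IsPartition l₂) (hz2 : EventuallyZero l₂) (hs2 : psum l₂ = 2 * n₂)
    (horth2 : IsOrthogonal l₂) (hspec2 : IsSpecial l₂) :
    (∀ j, 1 ≤ j → 0 ≤ (l₁ j : ℤ) + (l₂ j : ℤ) + xiSeq l₁ l₂ j) ∧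
    IsPartition (indPart l₁ l₂) ∧ EventuallyZero (indPart l₁ l₂) ∧
    psum (indPart l₁ l₂) = 2 * n ∧ IsSymplectic (indPart l₁ l₂) := by
  obtain ⟨N₁, hN₁⟩ := hz1
  obtain ⟨N₂, hN₂⟩ := hz2
  -- Part 0: nonnegativity
  have hnn : ∀ j, 1 ≤ j → 0 ≤ (l₁ j : ℤ) + (l₂ j : ℤ) + xiSeq l₁ l₂ j :=
    fun j hj => xi_nonneg_aux j hj
  -- Part 1: partition
  have hpart : IsPartition (indPart l₁ l₂) := by
    intro j hj
    have d1 : l₁ (j + 1) ≤ l₁ j := hp1 j hj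
    have d2 : l₂ (j + 1) ≤ l₂ j := hp2 j hj
    have key : (l₁ (j + 1) : ℤ) + l₂ (j + 1) + xiSeq l₁ l₂ (j + 1) ≤
        (l₁ j : ℤ) + l₂ j + xiSeq l₁ l₂ j := by
      rcases xi_cases l₁ l₂ (j + 1) with h | ⟨h, hmem⟩ | ⟨h, hmem⟩
      · rcases xi_cases l₁ l₂ j with h' | ⟨h', _⟩ | ⟨h', hmem'⟩
        · rw [h, h']; push_cast; omega
        · rw [h, h']; push_cast; omega
        · rcases hmem'.2.2.2 with hd | hd <;> (rw [h, h']; push_cast; omega)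
      · -- ξ(j+1) = 1
        have hoddj1 : (j + 1) % 2 = 1 := Nat.odd_iff.mp hmem.1
        have hdec : l₁ j > l₁ (j + 1) ∨ l₂ j > l₂ (j + 1) := by
          rcases hmem.2.2 with h1 | h1 | h1
          · omega
          · left; rwa [Nat.add_sub_cancel] at h1
          · right; rwa [Nat.add_sub_cancel] at h1
        rcases xi_cases l₁ l₂ j with h' | ⟨h', hmem'⟩ | ⟨h', hmem'⟩
        · rcases hdec with hd | hd <;> (rw [h, h']; push_cast; omega)
        · have : j % 2 = 1 := Nat.odd_iff.mp hmem'.1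
          omega
        · have e1 : l₁ j % 2 = 0 := Nat.even_iff.mp hmem'.2.2.1.1
          have o1 : l₂ j % 2 = 1 := Nat.odd_iff.mp hmem'.2.2.1.2
          have e2 : l₁ (j + 1) % 2 = 0 := Nat.even_iff.mp hmem.2.1.1
          have o2 : l₂ (j + 1) % 2 = 1 := Nat.odd_iff.mp hmem.2.1.2
          rcases hdec with hd | hd <;> (rw [h, h']; push_cast; omega)
      · rcases xi_cases l₁ l₂ j with h' | ⟨h', _⟩ | ⟨h', _⟩ <;>
          (rw [h, h']; push_cast; omega)
    have n1 := hnn j hj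
    have n2 := hnn (j + 1) (by omega)
    unfold indPart
    omega
  -- Part 2: eventually zero
  have hzero : ∀ j, N₁ + N₂ + 1 ≤ j → indPart l₁ l₂ j = 0 := by
    intro j hj
    have h1 := hN₁ j (by omega)
    have h2 := hN₂ j (by omega)
    have hxi : xiSeq l₁ l₂ j = 0 := xi_zero_of_not_good (by
      intro hgd
      have := Nat.odd_iff.mp hgd.2
      omega)
    unfold indPart
    rw [h1, h2, hxi]
    simp
  have hev : EventuallyZero (indPart l₁ l₂) := ⟨N₁ + N₂ + 1, hzero⟩
  -- Part 3: sum
  have hpsum : psum (indPart l₁ l₂) = 2 * n := by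
    set K := N₁ + N₂ + 1 with hK
    have hsupp : ∀ (l : ℕ → ℕ) (N : ℕ), (∀ j, N ≤ j → l j = 0) → N ≤ 2 * K →
        psum l = ∑ j ∈ Finset.range (2 * K), l (j + 1) := by
      intro l N hN hNK
      apply finsum_eq_sum_of_support_subset
      intro j hj
      rw [Function.mem_support] at hj
      simp only [Finset.coe_range, Set.mem_Iio]
      by_contra hc
      exact hj (hN (j + 1) (by omega))
    have e0 : psum (indPart l₁ l₂) = ∑ j ∈ Finset.range (2 * K), indPart l₁ l₂ (j + 1) :=
      hsupp _ (N₁ + N₂ + 1) hzero (by omega)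
    have e1 : psum l₁ = ∑ j ∈ Finset.range (2 * K), l₁ (j + 1) :=
      hsupp _ N₁ hN₁ (by omega)
    have e2 : psum l₂ = ∑ j ∈ Finset.range (2 * K), l₂ (j + 1) :=
      hsupp _ N₂ hN₂ (by omega)
    have hxisum : ∑ j ∈ Finset.range (2 * K), xiSeq l₁ l₂ (j + 1) = 0 :=
      xi_sum_zero hp1 hp2 hspec1 hspec2 hN₂ (by omega)
    have hZ : ((∑ j ∈ Finset.range (2 * K), indPart l₁ l₂ (j + 1) : ℕ) : ℤ) =
        2 * n₁ + 2 * n₂ := by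
      rw [Nat.cast_sum]
      have hcongr : ∀ j ∈ Finset.range (2 * K), (indPart l₁ l₂ (j + 1) : ℤ) =
          (l₁ (j + 1) : ℤ) + (l₂ (j + 1) : ℤ) + xiSeq l₁ l₂ (j + 1) :=
        fun j _ => indPart_cast (j + 1) (by omega)
      rw [Finset.sum_congr rfl hcongr, Finset.sum_add_distrib, Finset.sum_add_distrib,
        hxisum, add_zero, ← Nat.cast_sum, ← Nat.cast_sum, ← e1, ← e2, hs1, hs2]
      push_cast
      ring
    rw [e0]
    omega
  -- pairing lemmas for l₁ and l₂
  have pairS : ∀ k, 1 ≤ k → Odd (l₁ (2 * k - 1)) → l₁ (2 * k) = l₁ (2 * k - 1) :=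
    pair_lemma hp1 ⟨N₁, hN₁⟩ hspec1 odd_hpos hsymp1 odd_hpar
  have pairS' : ∀ k, 1 ≤ k → Odd (l₁ (2 * k)) → l₁ (2 * k) = l₁ (2 * k - 1) :=
    pair_lemma' hp1 ⟨N₁, hN₁⟩ hspec1 odd_hpos hsymp1 odd_hpar
  have pairO : ∀ k, 1 ≤ k → (Even (l₂ (2 * k - 1)) ∧ 0 < l₂ (2 * k - 1)) →
      l₂ (2 * k) = l₂ (2 * k - 1) :=
    pair_lemma hp2 ⟨N₂, hN₂⟩ hspec2 evenpos_hpos (fun v hv => horth2 v hv.2 hv.1) evenpos_hpar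
  have pairO' : ∀ k, 1 ≤ k → (Even (l₂ (2 * k)) ∧ 0 < l₂ (2 * k)) →
      l₂ (2 * k) = l₂ (2 * k - 1) :=
    pair_lemma' hp2 ⟨N₂, hN₂⟩ hspec2 evenpos_hpos (fun v hv => horth2 v hv.2 hv.1) evenpos_hpar
  -- Part 4: symplectic
  have hsymp : IsSymplectic (indPart l₁ l₂) := by
    intro i hi
    have hi' : i % 2 = 1 := Nat.odd_iff.mp hi
    rcases Set.eq_empty_or_nonempty {j | 1 ≤ j ∧ indPart l₁ l₂ j = i} with hS | ⟨j₀, hj₀⟩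
    · rw [mult, hS]
      simp
    · have hipos : 0 < i := by omega
      obtain ⟨a, b, ha1, hab, hIcc⟩ := level_interval hpart hev hipos hj₀.1 hj₀.2
      -- membership criteria
      have memS : ∀ j, 1 ≤ j → ((i : ℤ) = (l₁ j : ℤ) + l₂ j + xiSeq l₁ l₂ j) →
          a ≤ j ∧ j ≤ b := by
        intro j hj hvalj
        have hcast := indPart_cast (l₁ := l₁) (l₂ := l₂) j hj
        have : indPart l₁ l₂ j = i := by omega
        have hmem : j ∈ Set.Icc a b := by rw [← hIcc]; exact ⟨hj, this⟩
        exact ⟨hmem.1, hmem.2⟩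
      have hval : ∀ j, a ≤ j → j ≤ b → xiSeq l₁ l₂ j = 0 ∧ i = l₁ j + l₂ j := by
        intro j h1 h2
        have hjS : j ∈ {j | 1 ≤ j ∧ indPart l₁ l₂ j = i} := by
          rw [hIcc]; exact ⟨h1, h2⟩
        have hj1 : 1 ≤ j := hjS.1
        have hji : indPart l₁ l₂ j = i := hjS.2
        have hcast := indPart_cast (l₁ := l₁) (l₂ := l₂) j hj1
        have hxi0 : xiSeq l₁ l₂ j = 0 := by
          rcases xi_cases l₁ l₂ j with h | ⟨h, hm⟩ | ⟨h, hm⟩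
          · exact h
          · exfalso
            have e1 : l₁ j % 2 = 0 := Nat.even_iff.mp hm.2.1.1
            have o1 : l₂ j % 2 = 1 := Nat.odd_iff.mp hm.2.1.2
            omega
          · exfalso
            have e1 : l₁ j % 2 = 0 := Nat.even_iff.mp hm.2.2.1.1
            have o1 : l₂ j % 2 = 1 := Nat.odd_iff.mp hm.2.2.1.2
            omega
        exact ⟨hxi0, by omega⟩
      obtain ⟨hxa, hia⟩ := hval a le_rfl hab
      obtain ⟨hxb, hib⟩ := hval b hab le_rfl
      have hc1 : l₁ b = l₁ a := by
        have t1 := part_anti hp1 ha1 hab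
        have t2 := part_anti hp2 ha1 hab
        omega
      have hc2 : l₂ b = l₂ a := by
        have t1 := part_anti hp1 ha1 hab
        have t2 := part_anti hp2 ha1 hab
        omega
      have hkey : (a % 2 = 1 ∧ b % 2 = 0) ∨ (a % 2 = 0 ∧ b % 2 = 1) := by
        rcases (show (l₁ a % 2 = 1 ∧ l₂ a % 2 = 0) ∨ (l₁ a % 2 = 0 ∧ l₂ a % 2 = 1) by omega)
          with ⟨p1, p2⟩ | ⟨p1, p2⟩
        · -- Case A : l₁ odd, l₂ even
          left
          constructor
          · by_contra hae'
            have hae : a % 2 = 0 := by omega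
            have ha2 : 2 ≤ a := by omega
            set m := a / 2 with hmdef
            have ham : a = 2 * m := by omega
            have hm1 : 1 ≤ m := by omega
            have hOdd1 : Odd (l₁ (2 * m)) := by
              rw [← ham]; exact Nat.odd_iff.mpr p1
            have E1' : l₁ (2 * m) = l₁ (2 * m - 1) := pairS' m hm1 hOdd1
            have haux1 : l₁ (2 * m) = l₁ a := by rw [← ham]
            have haux2 : l₂ (2 * m) = l₂ a := by rw [← ham]
            have E2' : l₂ (2 * m - 1) = l₂ a := by
              by_cases h0 : l₂ a = 0
              · have hpar := hspec2 m hm1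
                by_contra hne
                have hpos' : 0 < l₂ (2 * m - 1) := by omega
                have := pairO m hm1 ⟨Nat.even_iff.mpr (by omega), hpos'⟩
                omega
              · have := pairO' m hm1 ⟨Nat.even_iff.mpr (by omega), by omega⟩
                omega
            have hxi : xiSeq l₁ l₂ (2 * m - 1) = 0 := xi_zero_of_not_good (by
              intro hg
              have := Nat.even_iff.mp hg.1
              omega)
            have := memS (2 * m - 1) (by omega) (by rw [hxi, E2']
                                                    push_cast
                                                    omega)
            omega
          · by_contra hbe'
            have hbo : b % 2 = 1 := by omega
            set m := (b + 1) / 2 with hmdef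
            have hbm : b = 2 * m - 1 := by omega
            have hm1 : 1 ≤ m := by omega
            have hOdd1 : Odd (l₁ (2 * m - 1)) := by
              rw [← hbm]; exact Nat.odd_iff.mpr (by omega)
            have E1' : l₁ (2 * m) = l₁ (2 * m - 1) := pairS m hm1 hOdd1
            have haux1 : l₁ (2 * m - 1) = l₁ b := by rw [← hbm]
            have haux2 : l₂ (2 * m - 1) = l₂ b := by rw [← hbm]
            have E2' : l₂ (2 * m) = l₂ b := by
              by_cases h0 : l₂ b = 0
              · have hmono : l₂ (2 * m) ≤ l₂ (2 * m - 1) := by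
                  have := hp2 (2 * m - 1) (by omega)
                  rwa [show 2 * m - 1 + 1 = 2 * m by omega] at this
                omega
              · have := pairO m hm1 ⟨Nat.even_iff.mpr (by omega), by omega⟩
                omega
            have hxi : xiSeq l₁ l₂ (2 * m) = 0 := xi_zero_of_not_good (by
              intro hg
              have := Nat.even_iff.mp hg.1
              omega)
            have := memS (2 * m) (by omega) (by rw [hxi, E2']
                                                push_cast
                                                omega)
            omega
        · -- Case B : l₁ even, l₂ odd (good parity)
          right
          constructor
          · by_contra hae'
            have ha_odd : a % 2 = 1 := by omega
            have hgood : GoodIdx l₁ l₂ a := ⟨Nat.even_iff.mpr p1, Nat.odd_iff.mpr p2⟩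
            have hnp : a ∉ Jplus l₁ l₂ := by
              intro hm
              have := xi_eq_one hm
              omega
            have h3 : ¬(a = 1 ∨ l₁ (a - 1) > l₁ a ∨ l₂ (a - 1) > l₂ a) :=
              fun hx => hnp ⟨Nat.odd_iff.mpr ha_odd, hgood, hx⟩
            push_neg at h3
            obtain ⟨hne1, hle1, hle2⟩ := h3
            have ha2 : 2 ≤ a := by omega
            have me1 : l₁ (a - 1) = l₁ a := by
              have := hp1 (a - 1) (by omega)
              rw [show a - 1 + 1 = a by omega] at this
              omega
            have me2 : l₂ (a - 1) = l₂ a := by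
              have := hp2 (a - 1) (by omega)
              rw [show a - 1 + 1 = a by omega] at this
              omega
            have hxam : xiSeq l₁ l₂ (a - 1) = 0 := by
              apply xi_eq_zero' (not_jplus_of_even (by omega))
              intro hm
              rcases hm.2.2.2 with hd | hd <;>
                (rw [show a - 1 + 1 = a by omega] at hd; omega)
            have := memS (a - 1) (by omega) (by rw [hxam, me1, me2]
                                                push_cast
                                                omega)
            omega
          · by_contra hbe'
            have hb_even : b % 2 = 0 := by omega
            have hb2 : 2 ≤ b := by omega
            have hgoodb : GoodIdx l₁ l₂ b :=
              ⟨Nat.even_iff.mpr (by omega), Nat.odd_iff.mpr (by omega)⟩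
            have hnm : b ∉ Jminus l₁ l₂ := by
              intro hm
              have := xi_eq_negone hm (not_jplus_of_even hb_even)
              omega
            have h3 : ¬(l₁ b > l₁ (b + 1) ∨ l₂ b > l₂ (b + 1)) :=
              fun hx => hnm ⟨hb2, Nat.even_iff.mpr hb_even, hgoodb, hx⟩
            push_neg at h3
            obtain ⟨hle1, hle2⟩ := h3
            have me1 : l₁ (b + 1) = l₁ b := by
              have := hp1 b (by omega)
              omega
            have me2 : l₂ (b + 1) = l₂ b := by
              have := hp2 b (by omega)
              omega
            have hxbp : xiSeq l₁ l₂ (b + 1) = 0 := by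
              apply xi_eq_zero'
              · intro hm
                rcases hm.2.2 with hd | hd | hd
                · omega
                · rw [Nat.add_sub_cancel] at hd; omega
                · rw [Nat.add_sub_cancel] at hd; omega
              · exact not_jminus_of_odd (by omega)
            have := memS (b + 1) (by omega) (by rw [hxbp, me1, me2]
                                                push_cast
                                                omega)
            omega
      rw [mult_eq_of_Icc hIcc, Nat.even_iff]
      omega
  exact ⟨hnn, hpart, hev, hpsum, hsymp⟩
end
end

section
/- Let λ₁, λ₂ be as in the endoscopic induction (λ₁ special symplectic, λ₂ special orthogonal), λ their endoscopic induction, and ζ_{λ₁,λ₂}(λ) the sequence equal to 1 on the set of odd j of the form j_min(D) for a relative interval D, −1 on the set of even j of the form j_max(D) for a non-minimal relative interval D, and 0 elsewhere. Then ζ(λ₁) + ζ(λ₂) = ζ_{λ₁,λ₂}(λ) + ξ, where ξ is the ±1-indicator sequence of J^+ and J^- and ζ(λ_d) is the ±1-indicator sequence of P^+(λ_d) and P^-(λ_d). -/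
open Classical

noncomputable section

/-- `J_{1,min}`: minima of index sets of intervals of `λ₁`. -/
def Jmin1 (l₁ i1 : ℕ → ℕ) (t1 : ℕ) : Set ℕ :=
  {j | ∃ Δ, IsItv l₁ i1 t1 Δ ∧ IsLeast (idxSet l₁ Δ) j}

/-- `J_{1,max}`: maxima of index sets of non-minimal intervals of `λ₁`. -/
def Jmax1 (l₁ i1 : ℕ → ℕ) (t1 : ℕ) : Set ℕ :=
  {j | ∃ Δ, IsItv l₁ i1 t1 Δ ∧ 0 ∉ Δ ∧ IsGreatest (idxSet l₁ Δ) j}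

/-- `J_{2,min}`: minima of index sets of intervals of `λ₂`. -/
def Jmin2 (l₂ i2 : ℕ → ℕ) (t2 : ℕ) : Set ℕ :=
  {j | ∃ Δ, IsItvO l₂ i2 t2 Δ ∧ IsLeast (idxSet l₂ Δ) j}

/-- `J_{2,max}`: maxima of index sets of intervals of `λ₂`. -/
def Jmax2 (l₂ i2 : ℕ → ℕ) (t2 : ℕ) : Set ℕ :=
  {j | ∃ Δ, IsItvO l₂ i2 t2 Δ ∧ IsGreatest (idxSet l₂ Δ) j}

/-- The finite part of the set `𝒥` of 3.1. -/
def JfinSet (l₁ l₂ i1 i2 : ℕ → ℕ) (t1 t2 : ℕ) : Set ℕ :=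
  Jmin1 l₁ i1 t1 ∪ Jmax1 l₁ i1 t1 ∪ Jmin2 l₂ i2 t2 ∪ Jmax2 l₂ i2 t2

/-- There is a unique `d ∈ {1,2}` such that `S ⊆ J(Δ)` for some interval `Δ` of `λ_d`. -/
def UniqueSide (l₁ l₂ i1 i2 : ℕ → ℕ) (t1 t2 : ℕ) (S : Set ℕ) : Prop :=
  Xor' (∃ Δ, IsItv l₁ i1 t1 Δ ∧ S ⊆ idxSet l₁ Δ)
       (∃ Δ, IsItvO l₂ i2 t2 Δ ∧ S ⊆ idxSet l₂ Δ)

/-- Relative index intervals of 3.1: singletons at `𝒥⁺ ∪ 𝒥⁻`, and intervals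
`{j,...,j'}` (or `{j,...}` when `j' = ∞`) between consecutive elements of `𝒥`
contained in `J(Δ)` for a unique side `d`. -/
def RelIdx (l₁ l₂ i1 i2 : ℕ → ℕ) (t1 t2 : ℕ) (J : Set ℕ) : Prop :=
  (∃ j, (j ∈ Jmin1 l₁ i1 t1 ∩ Jmin2 l₂ i2 t2 ∨
         j ∈ Jmax1 l₁ i1 t1 ∩ Jmax2 l₂ i2 t2) ∧ J = {j}) ∨
  (∃ j j', j ∈ JfinSet l₁ l₂ i1 i2 t1 t2 ∧ j' ∈ JfinSet l₁ l₂ i1 i2 t1 t2 ∧ j < j' ∧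
      (∀ k, j < k → k < j' → k ∉ JfinSet l₁ l₂ i1 i2 t1 t2) ∧
      UniqueSide l₁ l₂ i1 i2 t1 t2 (Set.Icc j j') ∧ J = Set.Icc j j') ∨
  (∃ j, j ∈ JfinSet l₁ l₂ i1 i2 t1 t2 ∧
      (∀ k, j < k → k ∉ JfinSet l₁ l₂ i1 i2 t1 t2) ∧
      UniqueSide l₁ l₂ i1 i2 t1 t2 (Set.Ici j) ∧ J = Set.Ici j)

/-- `P^+_{λ₁,λ₂}(λ)`: odd minima `j_min(D)` of relative intervals. -/
def PplusRel (l₁ l₂ i1 i2 : ℕ → ℕ) (t1 t2 : ℕ) : Set ℕ :=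
  {j | Odd j ∧ ∃ J, RelIdx l₁ l₂ i1 i2 t1 t2 J ∧ IsLeast J j}

/-- `P^-_{λ₁,λ₂}(λ)`: even maxima `j_max(D)` of (non-minimal) relative intervals. -/
def PminusRel (l₁ l₂ i1 i2 : ℕ → ℕ) (t1 t2 : ℕ) : Set ℕ :=
  {j | Even j ∧ ∃ J, RelIdx l₁ l₂ i1 i2 t1 t2 J ∧ IsGreatest J j}

/-- The sequence `ζ_{λ₁,λ₂}(λ)`. -/
def zetaRel (l₁ l₂ i1 i2 : ℕ → ℕ) (t1 t2 : ℕ) (j : ℕ) : ℤ :=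
  if j ∈ PplusRel l₁ l₂ i1 i2 t1 t2 then 1
  else if j ∈ PminusRel l₁ l₂ i1 i2 t1 t2 then -1 else 0

/-! ### Auxiliary theory -/

namespace ZE

/-- Unified hypotheses for one side (`ε = 0`: symplectic, `ε = 1`: orthogonal). -/
structure Side (l iSeq : ℕ → ℕ) (t ε : ℕ) : Prop where
  mono : IsPartition l
  evz : EventuallyZero l
  spec : IsSpecial l
  ht : Even t
  dec : ∀ h h', 1 ≤ h → h < h' → h' ≤ t → iSeq h' < iSeq h
  par : ∀ h, 1 ≤ h → h ≤ t → iSeq h % 2 = ε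
  oddm : ∀ h, 1 ≤ h → h ≤ t → iSeq h ≠ 0 → Odd (mult l (iSeq h))
  compl : ∀ i, Odd (mult l i) → ∃ h, 1 ≤ h ∧ h ≤ t ∧ iSeq h = i

variable {l iSeq : ℕ → ℕ} {t ε : ℕ}

theorem Side.mono' (S : Side l iSeq t ε) {j k : ℕ} (hj : 1 ≤ j) (hjk : j ≤ k) :
    l k ≤ l j := by
  induction k with
  | zero => omega
  | succ n ih =>
    rcases Nat.lt_or_ge j (n+1) with h | h
    · exact le_trans (S.mono n (by omega)) (ih (by omega))
    · have hjn : j = n + 1 := by omega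
      rw [hjn]

theorem Side.mult0 (S : Side l iSeq t ε) : mult l 0 = 0 := by
  obtain ⟨N, hN⟩ := S.evz
  have hinf : {j : ℕ | 1 ≤ j ∧ l j = 0}.Infinite := by
    apply Set.infinite_of_not_bddAbove
    rintro ⟨B, hB⟩
    have : max N 1 + B + 1 ∈ {j : ℕ | 1 ≤ j ∧ l j = 0} :=
      ⟨by omega, hN _ (by omega)⟩
    have := hB this
    omega
  have : Infinite ↥{j : ℕ | 1 ≤ j ∧ l j = 0} := Set.infinite_coe_iff.2 hinf
  rw [mult]
  exact Nat.card_eq_zero_of_infinite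

theorem Side.fiber_finite (S : Side l iSeq t ε) {i : ℕ} (hi : i ≠ 0) :
    {j : ℕ | 1 ≤ j ∧ l j = i}.Finite := by
  obtain ⟨N, hN⟩ := S.evz
  apply Set.Finite.subset (Set.finite_Icc 1 N)
  rintro j ⟨h1, h2⟩
  refine ⟨h1, ?_⟩
  by_contra h
  exact hi (h2 ▸ hN j (by omega))

theorem Side.exists_part (S : Side l iSeq t ε) {i : ℕ} (hi : 0 < mult l i) :
    ∃ k, 1 ≤ k ∧ l k = i := by
  have : Nonempty {j : ℕ | 1 ≤ j ∧ l j = i} := Nat.card_pos_iff.mp hi |>.1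
  obtain ⟨⟨k, hk⟩⟩ := this
  exact ⟨k, hk⟩

theorem Side.mult_pos (S : Side l iSeq t ε) {j : ℕ} (hj : 1 ≤ j) (h0 : l j ≠ 0) :
    0 < mult l (l j) := by
  rw [mult, Nat.card_pos_iff]
  exact ⟨⟨⟨j, hj, rfl⟩⟩, Set.finite_coe_iff.2 (S.fiber_finite h0)⟩

theorem Side.jord (S : Side l iSeq t ε) {j : ℕ} (hj : 1 ≤ j) :
    l j = 0 ∨ 0 < mult l (l j) := by
  by_cases h : l j = 0
  · exact Or.inl h
  · exact Or.inr (S.mult_pos hj h)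

theorem Side.part_le_one (S : Side l iSeq t ε) {k : ℕ} (hk : 1 ≤ k) : l k ≤ l 1 :=
  S.mono' le_rfl hk

/-- `cnt l v`: the number of indices `k ≥ 1` with `l k > v`. -/
def cnt (l : ℕ → ℕ) (v : ℕ) : ℕ := sInf {m | l (m+1) ≤ v}

theorem Side.cnt_nonempty (S : Side l iSeq t ε) (v : ℕ) : {m | l (m+1) ≤ v}.Nonempty := by
  obtain ⟨N, hN⟩ := S.evz
  exact ⟨N, by simp [hN (N+1) (by omega)]⟩

theorem Side.cnt_le (S : Side l iSeq t ε) (v : ℕ) : l (cnt l v + 1) ≤ v :=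
  Nat.sInf_mem (S.cnt_nonempty v)

theorem Side.cnt_spec (S : Side l iSeq t ε) {v k : ℕ} (hk : 1 ≤ k) :
    v < l k ↔ k ≤ cnt l v := by
  constructor
  · intro h
    by_contra hc
    have : cnt l v + 1 ≤ k := by omega
    have := S.mono' (j := cnt l v + 1) (by omega) this
    have := S.cnt_le v
    omega
  · intro h
    have hk1 : k - 1 < cnt l v := by omega
    have : k - 1 ∉ {m | l (m+1) ≤ v} := Nat.notMem_of_lt_sInf hk1
    simp only [Set.mem_setOf_eq, not_le] at this
    have hkk : k - 1 + 1 = k := by omega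
    rwa [hkk] at this

theorem Side.jmin_val (S : Side l iSeq t ε) {i : ℕ} (hne : ∃ k, 1 ≤ k ∧ l k = i) :
    l (cnt l i + 1) = i := by
  obtain ⟨k, hk1, hk2⟩ := hne
  have h1 : l (cnt l i + 1) ≤ i := S.cnt_le i
  have h2 : ¬ (i < l k) := by omega
  rw [S.cnt_spec hk1] at h2
  have := S.mono' (j := cnt l i + 1) (by omega) (by omega : cnt l i + 1 ≤ k)
  omega

end ZE
namespace ZE
variable {l iSeq : ℕ → ℕ} {t ε : ℕ}

theorem mod2_eq_of_even_iff {a b : ℕ} (h : Even a ↔ Even b) : a % 2 = b % 2 := by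
  rcases Nat.even_or_odd a with ha | ha
  · have hb := h.1 ha
    rw [Nat.even_iff] at ha hb; omega
  · have hb : ¬ Even b := fun h' => (Nat.not_even_iff_odd.2 ha) (h.2 h')
    rw [Nat.odd_iff] at ha
    rw [Nat.even_iff] at hb; omega

theorem Side.cnt_parity (S : Side l iSeq t ε) (v : ℕ) :
    cnt l v % 2 = ((Finset.Icc 1 t).filter (fun h => v < iSeq h)).card % 2 := by
  classical
  obtain ⟨N, hN⟩ := S.evz
  set M := max N (cnt l v + 1) with hM
  set F := (Finset.Icc 1 M).filter (fun k => v < l k) with hF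
  have hFeq : F = Finset.Icc 1 (cnt l v) := by
    ext k
    simp only [hF, Finset.mem_filter, Finset.mem_Icc]
    constructor
    · rintro ⟨⟨h1, _⟩, h2⟩
      exact ⟨h1, (S.cnt_spec h1).1 h2⟩
    · rintro ⟨h1, h2⟩
      exact ⟨⟨h1, by omega⟩, (S.cnt_spec h1).2 h2⟩
  have hcard : cnt l v = F.card := by rw [hFeq, Nat.card_Icc]; omega
  have hfib : F.card = ∑ i ∈ Finset.Ioc v (l 1), (F.filter (fun k => l k = i)).card := by
    apply Finset.card_eq_sum_card_fiberwise
    intro k hk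
    simp only [hF, Finset.mem_coe, Finset.mem_filter, Finset.mem_Icc] at hk
    exact Finset.mem_Ioc.2 ⟨hk.2, S.part_le_one hk.1.1⟩
  have hmult : ∀ i ∈ Finset.Ioc v (l 1), (F.filter (fun k => l k = i)).card = mult l i := by
    intro i hi
    rw [Finset.mem_Ioc] at hi
    have hi0 : i ≠ 0 := by omega
    have hset : {j : ℕ | 1 ≤ j ∧ l j = i} = ↑(F.filter (fun k => l k = i)) := by
      ext j
      simp only [Set.mem_setOf_eq, Finset.coe_filter, hF, Finset.mem_filter, Finset.mem_Icc]
      constructor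
      · rintro ⟨h1, h2⟩
        have : j < N := by
          by_contra hc
          exact hi0 (h2 ▸ hN j (by omega))
        exact ⟨⟨⟨h1, by omega⟩, by omega⟩, h2⟩
      · rintro ⟨⟨⟨h1, _⟩, _⟩, h2⟩
        exact ⟨h1, h2⟩
    rw [mult, hset, Nat.card_coe_set_eq, Set.ncard_coe_finset]
  have hsum : cnt l v = ∑ i ∈ Finset.Ioc v (l 1), mult l i := by
    rw [hcard, hfib]
    exact Finset.sum_congr rfl hmult
  have hparity : cnt l v % 2 =
      ((Finset.Ioc v (l 1)).filter (fun i => Odd (mult l i))).card % 2 := by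
    rw [hsum]
    exact mod2_eq_of_even_iff (Finset.even_sum_iff_even_card_odd _)
  rw [hparity]
  congr 1
  have himg : (Finset.Ioc v (l 1)).filter (fun i => Odd (mult l i)) =
      ((Finset.Icc 1 t).filter (fun h => v < iSeq h)).image iSeq := by
    ext i
    simp only [Finset.mem_filter, Finset.mem_Ioc, Finset.mem_image, Finset.mem_Icc]
    constructor
    · rintro ⟨⟨h1, _⟩, h3⟩
      obtain ⟨h, hh1, hh2, hh3⟩ := S.compl i h3
      exact ⟨h, ⟨⟨hh1, hh2⟩, by omega⟩, hh3⟩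
    · rintro ⟨h, ⟨⟨hh1, hh2⟩, hv⟩, rfl⟩
      have hne : iSeq h ≠ 0 := by omega
      have hodd := S.oddm h hh1 hh2 hne
      have hpos : 0 < mult l (iSeq h) := by
        rcases hodd with ⟨m, hm⟩; omega
      obtain ⟨k, hk1, hk2⟩ := S.exists_part hpos
      exact ⟨⟨hv, hk2 ▸ S.part_le_one hk1⟩, hodd⟩
  rw [himg]
  rw [Finset.card_image_of_injOn]
  intro a ha b hb hab
  simp only [Finset.coe_filter, Set.mem_setOf_eq, Finset.mem_Icc] at ha hb
  by_contra hne
  rcases Nat.lt_or_ge a b with h | h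
  · have := S.dec a b ha.1.1 h hb.1.2; omega
  · have hlt : b < a := by omega
    have := S.dec b a hb.1.1 hlt ha.1.2; omega

theorem Side.par_top (S : Side l iSeq t ε) {h : ℕ} (h1 : 1 ≤ h) (h2 : 2*h ≤ t) :
    cnt l (iSeq (2*h-1)) % 2 = 0 := by
  rw [S.cnt_parity]
  have : (Finset.Icc 1 t).filter (fun h' => iSeq (2*h-1) < iSeq h') = Finset.Icc 1 (2*h-2) := by
    ext h'
    simp only [Finset.mem_filter, Finset.mem_Icc]
    constructor
    · rintro ⟨⟨hh1, hh2⟩, hlt⟩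
      refine ⟨hh1, ?_⟩
      by_contra hc
      rcases Nat.lt_or_ge (2*h-1) h' with hor | hor
      · have := S.dec (2*h-1) h' (by omega) hor hh2; omega
      · have he : h' = 2*h-1 := by omega
        rw [he] at hlt
        omega
    · rintro ⟨hh1, hh2⟩
      exact ⟨⟨hh1, by omega⟩, S.dec h' (2*h-1) hh1 (by omega) (by omega)⟩
  rw [this, Nat.card_Icc]
  omega

theorem Side.par_in (S : Side l iSeq t ε) {h v : ℕ} (h1 : 1 ≤ h) (h2 : 2*h ≤ t)
    (hv1 : iSeq (2*h) ≤ v) (hv2 : v < iSeq (2*h-1)) : cnt l v % 2 = 1 := by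
  rw [S.cnt_parity]
  have : (Finset.Icc 1 t).filter (fun h' => v < iSeq h') = Finset.Icc 1 (2*h-1) := by
    ext h'
    simp only [Finset.mem_filter, Finset.mem_Icc]
    constructor
    · rintro ⟨⟨hh1, hh2⟩, hlt⟩
      refine ⟨hh1, ?_⟩
      by_contra hc
      have hle : iSeq h' ≤ iSeq (2*h) := by
        rcases Nat.lt_or_ge (2*h) h' with hor | hor
        · exact le_of_lt (S.dec (2*h) h' (by omega) hor hh2)
        · have : h' = 2*h := by omega
          rw [this]
      omega
    · rintro ⟨hh1, hh2⟩
      have hge : iSeq (2*h-1) ≤ iSeq h' := by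
        rcases Nat.lt_or_ge h' (2*h-1) with hor | hor
        · exact le_of_lt (S.dec h' (2*h-1) hh1 hor (by omega))
        · have : h' = 2*h-1 := by omega
          rw [this]
      exact ⟨⟨hh1, by omega⟩, by omega⟩
  rw [this, Nat.card_Icc]
  omega

theorem Side.par_bot (S : Side l iSeq t ε) {h : ℕ} (h1 : 1 ≤ h) (h2 : 2*h ≤ t)
    (hb : iSeq (2*h) ≠ 0) : cnt l (iSeq (2*h) - 1) % 2 = 0 := by
  rw [S.cnt_parity]
  have : (Finset.Icc 1 t).filter (fun h' => iSeq (2*h) - 1 < iSeq h') = Finset.Icc 1 (2*h) := by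
    ext h'
    simp only [Finset.mem_filter, Finset.mem_Icc]
    constructor
    · rintro ⟨⟨hh1, hh2⟩, hlt⟩
      refine ⟨hh1, ?_⟩
      by_contra hc
      have := S.dec (2*h) h' (by omega) (by omega) hh2; omega
    · rintro ⟨hh1, hh2⟩
      have hge : iSeq (2*h) ≤ iSeq h' := by
        rcases Nat.lt_or_ge h' (2*h) with hor | hor
        · exact le_of_lt (S.dec h' (2*h) hh1 hor (by omega))
        · have : h' = 2*h := by omega
          rw [this]
      exact ⟨⟨hh1, by omega⟩, by omega⟩
  rw [this, Nat.card_Icc]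
  omega

theorem Side.par_out (S : Side l iSeq t ε) {v : ℕ} (hv : ¬ InRange iSeq t v) :
    cnt l v % 2 = 0 := by
  classical
  rw [S.cnt_parity]
  set H := (Finset.Icc 1 t).filter (fun h => v < iSeq h) with hH
  rcases eq_or_ne H ∅ with he | he
  · rw [he]; rfl
  have hne : H.Nonempty := Finset.nonempty_iff_ne_empty.2 he
  set m := H.max' hne with hm
  have hmem : m ∈ H := H.max'_mem hne
  have hmH : ∀ h' ∈ H, h' ≤ m := fun h' hh => H.le_max' h' hh
  have hHeq : H = Finset.Icc 1 m := by
    ext h'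
    simp only [hH, Finset.mem_filter, Finset.mem_Icc]
    constructor
    · rintro ⟨⟨hh1, _⟩, _⟩
      refine ⟨hh1, ?_⟩
      apply hmH
      simp only [hH, Finset.mem_filter, Finset.mem_Icc]
      tauto
    · rintro ⟨hh1, hh2⟩
      simp only [hH, Finset.mem_filter, Finset.mem_Icc] at hmem
      have : iSeq m ≤ iSeq h' := by
        rcases Nat.lt_or_ge h' m with hor | hor
        · exact le_of_lt (S.dec h' m hh1 hor hmem.1.2)
        · have : h' = m := by omega
          rw [this]
      exact ⟨⟨hh1, by omega⟩, by omega⟩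
  rw [hHeq, Nat.card_Icc]
  simp only [hH, Finset.mem_filter, Finset.mem_Icc] at hmem
  by_contra hc
  -- m is odd, m < t
  obtain ⟨u, hu⟩ := S.ht
  have hmt : m ≤ t := hmem.1.2
  have hmodd : m % 2 = 1 := by omega
  set k := (m+1)/2 with hk
  have hm2k : m = 2*k - 1 := by omega
  have h2kt : 2*k ≤ t := by omega
  have h2knotin : (2*k : ℕ) ∉ H := by
    intro hin
    have := hmH _ hin
    omega
  simp only [hH, Finset.mem_filter, Finset.mem_Icc, not_and, not_lt] at h2knotin
  have hle : iSeq (2*k) ≤ v := h2knotin ⟨by omega, h2kt⟩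
  exact hv ⟨k, by omega, h2kt, hle, by rw [← hm2k]; omega⟩

theorem Side.not_inrange_pred (S : Side l iSeq t ε) {i : ℕ} (hi : 1 ≤ i)
    (hp : i % 2 = ε) (h : ¬ InRange iSeq t i) : ¬ InRange iSeq t (i-1) := by
  rintro ⟨h', hh1, hh2, hb, ht'⟩
  have hpar := S.par (2*h'-1) (by omega) (by omega)
  have : iSeq (2*h'-1) ≠ i - 1 := by
    intro hc
    rw [hc] at hpar
    omega
  exact h ⟨h', hh1, hh2, by omega, by omega⟩

theorem Side.x_step (S : Side l iSeq t ε) {v : ℕ} (hm : 0 < mult l v)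
    (hp : v % 2 ≠ ε) (hIR : InRange iSeq t v) :
    ∃ w, v < w ∧ w ≤ l 1 ∧ 0 < mult l w ∧ w % 2 ≠ ε ∧ InRange iSeq t w := by
  obtain ⟨h, hh1, hh2, hbv, hvt⟩ := hIR
  have hparb := S.par (2*h) (by omega) hh2
  have hpart := S.par (2*h-1) (by omega) (by omega)
  have hblt : iSeq (2*h) < v := by
    rcases eq_or_ne (iSeq (2*h)) v with hc | hc
    · rw [hc] at hparb; omega
    · omega
  have htlt : v < iSeq (2*h-1) := by
    rcases eq_or_ne (iSeq (2*h-1)) v with hc | hc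
    · rw [hc] at hpart; omega
    · omega
  have hcnt : cnt l v % 2 = 1 := S.par_in hh1 hh2 hbv htlt
  set a := cnt l v + 1 with ha
  have ha2 : a % 2 = 0 := by omega
  have ha1 : 2 ≤ a := by omega
  have hla : l a = v := S.jmin_val (S.exists_part hm)
  have hspec := S.spec (a/2) (by omega)
  have h2a : 2 * (a/2) = a := by omega
  rw [h2a] at hspec
  set w := l (a-1) with hw
  have hvw : v < w := by
    have := (S.cnt_spec (v := v) (k := a - 1) (by omega)).2 (by omega)
    rwa [hw]
  have hwle : w ≤ l 1 := S.part_le_one (by omega)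
  have hwpar : w % 2 = v % 2 := by
    rw [hspec, hla]
  have hwm : 0 < mult l w := S.mult_pos (by omega) (by omega)
  -- w ≤ top
  have htop0 : iSeq (2*h-1) ≠ 0 := by omega
  have htopm : 0 < mult l (iSeq (2*h-1)) := by
    have hodd := S.oddm (2*h-1) (by omega) (by omega) htop0
    rcases hodd with ⟨m', hm'⟩; omega
  have hjm : l (cnt l (iSeq (2*h-1)) + 1) = iSeq (2*h-1) := S.jmin_val (S.exists_part htopm)
  have hcle : cnt l (iSeq (2*h-1)) + 1 ≤ cnt l v := by
    apply (S.cnt_spec (by omega)).1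
    rw [hjm]; exact htlt
  have hwtop : w ≤ iSeq (2*h-1) := by
    by_contra hc
    have := (S.cnt_spec (v := iSeq (2*h-1)) (k := a - 1) (by omega)).1 (by omega)
    omega
  exact ⟨w, hvw, hwle, hwm, by omega, ⟨h, hh1, hh2, by omega, hwtop⟩⟩

theorem Side.not_inrange (S : Side l iSeq t ε) {v : ℕ} (hm : 0 < mult l v)
    (hp : v % 2 ≠ ε) : ¬ InRange iSeq t v := by
  suffices H : ∀ n v, l 1 - v ≤ n → 0 < mult l v → v % 2 ≠ ε → ¬ InRange iSeq t v from
    H (l 1 - v) v le_rfl hm hp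
  intro n
  induction n with
  | zero =>
    intro v hn hm' hp' hIR
    obtain ⟨w, hw1, hw2, _, _, _⟩ := S.x_step hm' hp' hIR
    omega
  | succ n ih =>
    intro v hn hm' hp' hIR
    obtain ⟨w, hw1, hw2, hw3, hw4, hw5⟩ := S.x_step hm' hp' hIR
    exact ih w (by omega) hw3 hw4 hw5

end ZE
namespace ZE
variable {l iSeq : ℕ → ℕ} {t ε : ℕ}

/-- Unified interval predicate. -/
def ItvU (l iSeq : ℕ → ℕ) (t ε : ℕ) (Δ : Set ℕ) : Prop :=
  (∃ h, 1 ≤ h ∧ 2*h ≤ t ∧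
      Δ = {i | (i = 0 ∨ 0 < mult l i) ∧ iSeq (2*h) ≤ i ∧ i ≤ iSeq (2*h-1)}) ∨
  (∃ i, i % 2 = ε ∧ (i = 0 ∨ 0 < mult l i) ∧ ¬ InRange iSeq t i ∧ Δ = {i})

theorem itvU_zero {Δ : Set ℕ} : ItvU l iSeq t 0 Δ ↔ IsItv l iSeq t Δ := by
  unfold ItvU IsItv
  apply or_congr Iff.rfl
  constructor
  · rintro ⟨i, hp, h2, h3, h4⟩
    exact ⟨i, Nat.even_iff.2 hp, h2, h3, h4⟩
  · rintro ⟨i, hp, h2, h3, h4⟩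
    exact ⟨i, Nat.even_iff.1 hp, h2, h3, h4⟩

theorem itvU_one (S : Side l iSeq t 1) {Δ : Set ℕ} :
    ItvU l iSeq t 1 Δ ↔ IsItvO l iSeq t Δ := by
  unfold ItvU IsItvO
  apply or_congr
  · constructor
    · rintro ⟨h, h1, h2, rfl⟩
      refine ⟨h, h1, h2, ?_⟩
      ext i
      simp only [Set.mem_setOf_eq]
      constructor
      · rintro ⟨hj, hb, ht'⟩
        rcases hj with rfl | hj
        · exfalso
          have := S.par (2*h) (by omega) h2
          omega
        · exact ⟨hj, hb, ht'⟩
      · rintro ⟨hj, hb, ht'⟩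
        exact ⟨Or.inr hj, hb, ht'⟩
    · rintro ⟨h, h1, h2, rfl⟩
      refine ⟨h, h1, h2, ?_⟩
      ext i
      simp only [Set.mem_setOf_eq]
      constructor
      · rintro ⟨hj, hb, ht'⟩
        exact ⟨Or.inr hj, hb, ht'⟩
      · rintro ⟨hj, hb, ht'⟩
        rcases hj with rfl | hj
        · exfalso
          have := S.par (2*h) (by omega) h2
          omega
        · exact ⟨hj, hb, ht'⟩
  · constructor
    · rintro ⟨i, hp, h2, h3, h4⟩
      have hi0 : i ≠ 0 := by omega
      rcases h2 with rfl | h2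
      · omega
      · exact ⟨i, Nat.odd_iff.2 hp, h2, h3, h4⟩
    · rintro ⟨i, hp, h2, h3, h4⟩
      exact ⟨i, Nat.odd_iff.1 hp, Or.inr h2, h3, h4⟩

theorem Side.parmem (S : Side l iSeq t ε) {Δ : Set ℕ} (hΔ : ItvU l iSeq t ε Δ)
    {i : ℕ} (hi : i ∈ Δ) : i % 2 = ε := by
  rcases hΔ with ⟨h, h1, h2, rfl⟩ | ⟨i0, hp, _, _, rfl⟩
  · obtain ⟨hj, hb, ht'⟩ := hi
    rcases hj with rfl | hj
    · have := S.par (2*h) (by omega) h2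
      omega
    · by_contra hc
      exact S.not_inrange hj hc ⟨h, h1, h2, hb, ht'⟩
  · rw [hi]; exact hp

theorem Side.zero_not_mem (S : Side l iSeq t ε) (hε : ε ≠ 0) {Δ : Set ℕ}
    (hΔ : ItvU l iSeq t ε Δ) : 0 ∉ Δ := by
  intro h0
  have := S.parmem hΔ h0
  omega

theorem mem_idxSet {Δ : Set ℕ} {j : ℕ} : j ∈ idxSet l Δ ↔ 1 ≤ j ∧ l j ∈ Δ := Iff.rfl

theorem Side.seg_sub (S : Side l iSeq t ε) {Δ : Set ℕ} (hΔ : ItvU l iSeq t ε Δ)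
    {a b k : ℕ} (ha : a ∈ idxSet l Δ) (hb : b ∈ idxSet l Δ)
    (h1 : a ≤ k) (h2 : k ≤ b) : k ∈ idxSet l Δ := by
  obtain ⟨ha1, ha2⟩ := ha
  obtain ⟨hb1, hb2⟩ := hb
  have hk1 : 1 ≤ k := le_trans ha1 h1
  have hka : l k ≤ l a := S.mono' ha1 h1
  have hkb : l b ≤ l k := S.mono' hk1 h2
  refine ⟨hk1, ?_⟩
  rcases hΔ with ⟨h, hh1, hh2, rfl⟩ | ⟨i0, hp, _, _, rfl⟩
  · obtain ⟨_, hab, hat⟩ := ha2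
    obtain ⟨_, hbb, hbt⟩ := hb2
    exact ⟨S.jord hk1, by omega, by omega⟩
  · simp only [Set.mem_singleton_iff] at ha2 hb2 ⊢
    omega

theorem Side.seg_sub' (S : Side l iSeq t ε) {Δ : Set ℕ} (hΔ : ItvU l iSeq t ε Δ)
    (h0 : 0 ∈ Δ) {a k : ℕ} (ha : a ∈ idxSet l Δ) (h1 : a ≤ k) : k ∈ idxSet l Δ := by
  obtain ⟨ha1, ha2⟩ := ha
  have hk1 : 1 ≤ k := le_trans ha1 h1
  have hka : l k ≤ l a := S.mono' ha1 h1
  refine ⟨hk1, ?_⟩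
  rcases hΔ with ⟨h, hh1, hh2, rfl⟩ | ⟨i0, hp, _, _, rfl⟩
  · obtain ⟨_, h0b, _⟩ := h0
    obtain ⟨_, hab, hat⟩ := ha2
    exact ⟨S.jord hk1, by omega, by omega⟩
  · simp only [Set.mem_singleton_iff] at ha2 h0 ⊢
    omega

theorem Side.least_prop (S : Side l iSeq t ε) {Δ : Set ℕ} (hΔ : ItvU l iSeq t ε Δ)
    {j : ℕ} (hj : IsLeast (idxSet l Δ) j) :
    Odd j ∧ l j % 2 = ε ∧ (j = 1 ∨ l (j - 1) > l j) := by
  obtain ⟨⟨hj1, hjΔ⟩, hlb⟩ := hj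
  have hpar : l j % 2 = ε := S.parmem hΔ hjΔ
  have hdec : j = 1 ∨ l (j - 1) > l j := by
    by_cases hc : j = 1
    · exact Or.inl hc
    · right
      have hge : l j ≤ l (j-1) := S.mono' (by omega) (by omega)
      rcases eq_or_lt_of_le hge with he | hlt
      · exfalso
        have : j - 1 ∈ idxSet l Δ := ⟨by omega, by rw [← he]; exact hjΔ⟩
        have := hlb this
        omega
      · exact hlt
  refine ⟨?_, hpar, hdec⟩
  rw [Nat.odd_iff]
  rcases hΔ with ⟨h, hh1, hh2, hE⟩ | ⟨i0, hp, hjord, hnIR, hE⟩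
  · have htlt : iSeq (2*h) < iSeq (2*h-1) := S.dec (2*h-1) (2*h) (by omega) (by omega) hh2
    have htop0 : iSeq (2*h-1) ≠ 0 := by omega
    have htopm : 0 < mult l (iSeq (2*h-1)) := (S.oddm (2*h-1) (by omega) (by omega) htop0).pos
    have hla : l (cnt l (iSeq (2*h-1)) + 1) = iSeq (2*h-1) := S.jmin_val (S.exists_part htopm)
    have haidx : cnt l (iSeq (2*h-1)) + 1 ∈ idxSet l Δ := by
      refine ⟨by omega, ?_⟩
      rw [hE]
      exact ⟨S.jord (by omega), by omega, by rw [hla]⟩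
    have hja : j ≤ cnt l (iSeq (2*h-1)) + 1 := hlb haidx
    rw [hE] at hjΔ
    obtain ⟨_, _, hjt⟩ := hjΔ
    have : ¬ (iSeq (2*h-1) < l j) := by omega
    rw [S.cnt_spec hj1] at this
    have := S.par_top hh1 hh2
    omega
  · rw [hE] at hjΔ
    simp only [Set.mem_singleton_iff] at hjΔ
    have hla : l (cnt l i0 + 1) = i0 := by
      rcases eq_or_ne i0 0 with rfl | hi0
      · have := S.cnt_le 0
        omega
      · exact S.jmin_val ⟨j, hj1, hjΔ⟩
    have haidx : cnt l i0 + 1 ∈ idxSet l Δ := ⟨by omega, by rw [hE]; exact hla⟩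
    have hja : j ≤ cnt l i0 + 1 := hlb haidx
    have : ¬ (i0 < l j) := by omega
    rw [S.cnt_spec hj1] at this
    have := S.par_out hnIR
    omega

theorem Side.exists_least_itv (S : Side l iSeq t ε) {j : ℕ} (hj1 : 1 ≤ j)
    (hodd : Odd j) (hpar : l j % 2 = ε) (hdec : j = 1 ∨ l (j - 1) > l j) :
    ∃ Δ, ItvU l iSeq t ε Δ ∧ IsLeast (idxSet l Δ) j := by
  rw [Nat.odd_iff] at hodd
  have hcnt : cnt l (l j) = j - 1 := by
    have h1 : ¬ (l j < l j) := lt_irrefl _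
    rw [S.cnt_spec hj1] at h1
    by_cases hj' : j = 1
    · omega
    · have hd : l (j-1) > l j := hdec.resolve_left hj'
      have := (S.cnt_spec (v := l j) (k := j-1) (by omega)).1 hd
      omega
  have hlow : ∀ k, 1 ≤ k → k < j → l j < l k := by
    intro k hk1 hkj
    exact (S.cnt_spec hk1).2 (by omega)
  by_cases hIR : InRange iSeq t (l j)
  · obtain ⟨h, hh1, hh2, hb, ht'⟩ := hIR
    have hte : l j = iSeq (2*h-1) := by
      by_contra hc
      have := S.par_in hh1 hh2 hb (by omega)
      omega
    refine ⟨_, Or.inl ⟨h, hh1, hh2, rfl⟩, ⟨⟨hj1, ?_⟩, ?_⟩⟩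
    · exact ⟨S.jord hj1, hb, by omega⟩
    · rintro k ⟨hk1, _, _, hkt⟩
      by_contra hc
      have := hlow k hk1 (by omega)
      omega
  · refine ⟨{l j}, Or.inr ⟨l j, hpar, S.jord hj1, hIR, rfl⟩, ⟨⟨hj1, rfl⟩, ?_⟩⟩
    rintro k ⟨hk1, hk2⟩
    simp only [Set.mem_singleton_iff] at hk2
    by_contra hc
    have := hlow k hk1 (by omega)
    omega

theorem Side.greatest_prop (S : Side l iSeq t ε) {Δ : Set ℕ} (hΔ : ItvU l iSeq t ε Δ)
    {j : ℕ} (hj : IsGreatest (idxSet l Δ) j) :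
    Even j ∧ 2 ≤ j ∧ l j % 2 = ε ∧ l j > l (j + 1) ∧ 0 ∉ Δ := by
  obtain ⟨⟨hj1, hjΔ⟩, hub⟩ := hj
  have h0 : 0 ∉ Δ := by
    intro h0
    obtain ⟨N, hN⟩ := S.evz
    have hk : N + j + 1 ∈ idxSet l Δ := ⟨by omega, by rw [hN _ (by omega)]; exact h0⟩
    have := hub hk
    omega
  have hpar : l j % 2 = ε := S.parmem hΔ hjΔ
  have hlj : 1 ≤ l j := by
    rcases Nat.eq_zero_or_pos (l j) with he | h
    · exact absurd (he ▸ hjΔ) h0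
    · exact h
  have hdec : l (j+1) < l j := by
    have hge : l (j+1) ≤ l j := S.mono j hj1
    rcases eq_or_lt_of_le hge with he | hlt
    · exfalso
      have : j + 1 ∈ idxSet l Δ := ⟨by omega, by rw [he]; exact hjΔ⟩
      have := hub this
      omega
    · exact hlt
  have hcnt : cnt l (l j - 1) = j := by
    have hge := (S.cnt_spec hj1).1 (by omega : l j - 1 < l j)
    set b := cnt l (l j - 1) with hb
    have hble : l j - 1 < l b := (S.cnt_spec (v := l j - 1) (k := b) (by omega)).2 le_rfl
    have hlb : l b ≤ l j := S.mono' hj1 hge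
    have : b ∈ idxSet l Δ := ⟨by omega, by rw [show l b = l j by omega]; exact hjΔ⟩
    have := hub this
    omega
  have heven : j % 2 = 0 := by
    rcases hΔ with ⟨h, hh1, hh2, hE⟩ | ⟨i0, hp, hjord, hnIR, hE⟩
    · have hbot0 : iSeq (2*h) ≠ 0 := by
        intro hc
        apply h0
        rw [hE]
        exact ⟨Or.inl rfl, by omega, by omega⟩
      have hbotm : 0 < mult l (iSeq (2*h)) := (S.oddm (2*h) (by omega) hh2 hbot0).pos
      rw [hE] at hjΔ
      obtain ⟨_, hjb, hjt⟩ := hjΔ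
      have hbe : l j = iSeq (2*h) := by
        by_contra hc
        have hlk0 : l (cnt l (iSeq (2*h)) + 1) = iSeq (2*h) := S.jmin_val (S.exists_part hbotm)
        have hk0b : cnt l (iSeq (2*h)) + 1 ≤ cnt l (iSeq (2*h) - 1) := by
          exact (S.cnt_spec (by omega)).1 (by omega)
        have hlb'1 : iSeq (2*h) - 1 < l (cnt l (iSeq (2*h) - 1)) :=
          (S.cnt_spec (v := iSeq (2*h) - 1) (k := cnt l (iSeq (2*h) - 1)) (by omega)).2 le_rfl
        have hlb'2 : l (cnt l (iSeq (2*h) - 1)) ≤ iSeq (2*h) := by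
          have := S.mono' (j := cnt l (iSeq (2*h)) + 1) (by omega) hk0b
          omega
        have hb'idx : cnt l (iSeq (2*h) - 1) ∈ idxSet l Δ := by
          refine ⟨by omega, ?_⟩
          rw [hE]
          refine ⟨S.jord (by omega), by omega, by omega⟩
        have hb'j : cnt l (iSeq (2*h) - 1) ≤ j := hub hb'idx
        have hjb' : j ≤ cnt l (iSeq (2*h) - 1) := by
          exact (S.cnt_spec hj1).1 (by omega)
        have : l j = l (cnt l (iSeq (2*h) - 1)) := by
          have h2 : j = cnt l (iSeq (2*h) - 1) := by omega
          rw [h2]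
        omega
      have := S.par_bot hh1 hh2 hbot0
      rw [hbe] at hcnt
      omega
    · rw [hE] at hjΔ h0
      simp only [Set.mem_singleton_iff] at hjΔ h0
      have hi0 : 1 ≤ i0 := by omega
      have := S.par_out (S.not_inrange_pred hi0 hp hnIR)
      rw [← hjΔ] at this
      omega
  exact ⟨Nat.even_iff.2 heven, by omega, hpar, hdec, h0⟩

theorem Side.exists_greatest_itv (S : Side l iSeq t ε) {j : ℕ} (hj1 : 1 ≤ j)
    (heven : Even j) (hpar : l j % 2 = ε) (hdec : l j > l (j + 1)) :
    ∃ Δ, ItvU l iSeq t ε Δ ∧ 0 ∉ Δ ∧ IsGreatest (idxSet l Δ) j := by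
  rw [Nat.even_iff] at heven
  have hlj : 1 ≤ l j := by omega
  have hcnt : cnt l (l j - 1) = j := by
    have hge := (S.cnt_spec hj1).1 (by omega : l j - 1 < l j)
    have hle : ¬ (j + 1 ≤ cnt l (l j - 1)) := by
      rw [← S.cnt_spec (by omega)]
      omega
    omega
  have hub : ∀ k, 1 ≤ k → l j ≤ l k → k ≤ j := by
    intro k hk1 hk2
    have := (S.cnt_spec (v := l j - 1) hk1).1 (by omega)
    omega
  by_cases hIR : InRange iSeq t (l j)
  · obtain ⟨h, hh1, hh2, hb, ht'⟩ := hIR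
    have hbe : l j = iSeq (2*h) := by
      by_contra hc
      have := S.par_in hh1 hh2 (by omega) (by omega : l j - 1 < iSeq (2*h-1))
      omega
    refine ⟨_, Or.inl ⟨h, hh1, hh2, rfl⟩, ?_, ⟨⟨hj1, ?_⟩, ?_⟩⟩
    · rintro ⟨_, hc, _⟩
      omega
    · exact ⟨S.jord hj1, by omega, ht'⟩
    · rintro k ⟨hk1, _, hkb, _⟩
      exact hub k hk1 (by omega)
  · refine ⟨{l j}, Or.inr ⟨l j, hpar, S.jord hj1, hIR, rfl⟩, ?_, ⟨⟨hj1, rfl⟩, ?_⟩⟩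
    · simp only [Set.mem_singleton_iff]
      omega
    · rintro k ⟨hk1, hk2⟩
      simp only [Set.mem_singleton_iff] at hk2
      exact hub k hk1 (by omega)

theorem Side.exists_greatest_of_mem (S : Side l iSeq t ε) {Δ : Set ℕ}
    (h0 : 0 ∉ Δ) {j : ℕ} (hj : j ∈ idxSet l Δ) :
    ∃ b, IsGreatest (idxSet l Δ) b ∧ j ≤ b := by
  obtain ⟨N, hN⟩ := S.evz
  have hbdd : ∀ k ∈ idxSet l Δ, k ≤ N := by
    intro k hk
    by_contra hc
    exact h0 (hN k (by omega) ▸ hk.2)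
  have hne : (idxSet l Δ).Nonempty := ⟨j, hj⟩
  have hbdd' : BddAbove (idxSet l Δ) := ⟨N, fun k hk => hbdd k hk⟩
  exact ⟨sSup (idxSet l Δ), ⟨Nat.sSup_mem hne hbdd', fun k hk => le_csSup hbdd' hk⟩,
    le_csSup hbdd' hj⟩

theorem exists_least_of_mem {Δ : Set ℕ} {j : ℕ} (hj : j ∈ idxSet l Δ) :
    ∃ a, IsLeast (idxSet l Δ) a ∧ a ≤ j :=
  ⟨sInf (idxSet l Δ), ⟨Nat.sInf_mem ⟨j, hj⟩, fun k hk => Nat.sInf_le hk⟩, Nat.sInf_le hj⟩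

theorem Side.cover (S : Side l iSeq t ε) {j : ℕ} (hj1 : 1 ≤ j) (hpar : l j % 2 = ε) :
    ∃ Δ, ItvU l iSeq t ε Δ ∧ j ∈ idxSet l Δ := by
  by_cases hIR : InRange iSeq t (l j)
  · obtain ⟨h, hh1, hh2, hb, ht'⟩ := hIR
    exact ⟨_, Or.inl ⟨h, hh1, hh2, rfl⟩, hj1, S.jord hj1, hb, ht'⟩
  · exact ⟨{l j}, Or.inr ⟨l j, hpar, S.jord hj1, hIR, rfl⟩, hj1, rfl⟩

theorem Side.not_cover (S : Side l iSeq t ε) {j : ℕ} (hpar : l j % 2 ≠ ε)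
    {Δ : Set ℕ} (hΔ : ItvU l iSeq t ε Δ) : j ∉ idxSet l Δ := by
  rintro ⟨_, hm⟩
  exact hpar (S.parmem hΔ hm)

end ZE
namespace ZE
section Two

variable {l₁ l₂ i1 i2 : ℕ → ℕ} {t1 t2 : ℕ}

theorem jmin1_iff (S1 : Side l₁ i1 t1 0) {j : ℕ} :
    j ∈ Jmin1 l₁ i1 t1 ↔ Odd j ∧ Even (l₁ j) ∧ (j = 1 ∨ l₁ (j - 1) > l₁ j) := by
  constructor
  · rintro ⟨Δ, hI, hL⟩
    obtain ⟨h1, h2, h3⟩ := S1.least_prop (itvU_zero.2 hI) hL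
    exact ⟨h1, Nat.even_iff.2 h2, h3⟩
  · rintro ⟨h1, h2, h3⟩
    have hj1 : 1 ≤ j := by
      rw [Nat.odd_iff] at h1; omega
    obtain ⟨Δ, hI, hL⟩ := S1.exists_least_itv hj1 h1 (Nat.even_iff.1 h2) h3
    exact ⟨Δ, itvU_zero.1 hI, hL⟩

theorem jmin2_iff (S2 : Side l₂ i2 t2 1) {j : ℕ} :
    j ∈ Jmin2 l₂ i2 t2 ↔ Odd j ∧ Odd (l₂ j) ∧ (j = 1 ∨ l₂ (j - 1) > l₂ j) := by
  constructor
  · rintro ⟨Δ, hI, hL⟩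
    obtain ⟨h1, h2, h3⟩ := S2.least_prop ((itvU_one S2).2 hI) hL
    exact ⟨h1, Nat.odd_iff.2 h2, h3⟩
  · rintro ⟨h1, h2, h3⟩
    have hj1 : 1 ≤ j := by
      rw [Nat.odd_iff] at h1; omega
    obtain ⟨Δ, hI, hL⟩ := S2.exists_least_itv hj1 h1 (Nat.odd_iff.1 h2) h3
    exact ⟨Δ, (itvU_one S2).1 hI, hL⟩

theorem jmax1_iff (S1 : Side l₁ i1 t1 0) {j : ℕ} :
    j ∈ Jmax1 l₁ i1 t1 ↔ Even j ∧ 2 ≤ j ∧ Even (l₁ j) ∧ l₁ j > l₁ (j + 1) := by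
  constructor
  · rintro ⟨Δ, hI, h0, hG⟩
    obtain ⟨h1, h2, h3, h4, _⟩ := S1.greatest_prop (itvU_zero.2 hI) hG
    exact ⟨h1, h2, Nat.even_iff.2 h3, h4⟩
  · rintro ⟨h1, h2, h3, h4⟩
    obtain ⟨Δ, hI, h0, hG⟩ := S1.exists_greatest_itv (by omega) h1 (Nat.even_iff.1 h3) h4
    exact ⟨Δ, itvU_zero.1 hI, h0, hG⟩

theorem jmax2_iff (S2 : Side l₂ i2 t2 1) {j : ℕ} :
    j ∈ Jmax2 l₂ i2 t2 ↔ Even j ∧ 2 ≤ j ∧ Odd (l₂ j) ∧ l₂ j > l₂ (j + 1) := by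
  constructor
  · rintro ⟨Δ, hI, hG⟩
    obtain ⟨h1, h2, h3, h4, _⟩ := S2.greatest_prop ((itvU_one S2).2 hI) hG
    exact ⟨h1, h2, Nat.odd_iff.2 h3, h4⟩
  · rintro ⟨h1, h2, h3, h4⟩
    obtain ⟨Δ, hI, h0, hG⟩ := S2.exists_greatest_itv (by omega) h1 (Nat.odd_iff.1 h3) h4
    exact ⟨Δ, (itvU_one S2).1 hI, hG⟩

theorem mem_jfin_min1 {j : ℕ} (h : j ∈ Jmin1 l₁ i1 t1) :
    j ∈ JfinSet l₁ l₂ i1 i2 t1 t2 := Or.inl (Or.inl (Or.inl h))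

theorem mem_jfin_max1 {j : ℕ} (h : j ∈ Jmax1 l₁ i1 t1) :
    j ∈ JfinSet l₁ l₂ i1 i2 t1 t2 := Or.inl (Or.inl (Or.inr h))

theorem mem_jfin_min2 {j : ℕ} (h : j ∈ Jmin2 l₂ i2 t2) :
    j ∈ JfinSet l₁ l₂ i1 i2 t1 t2 := Or.inl (Or.inr h)

theorem mem_jfin_max2 {j : ℕ} (h : j ∈ Jmax2 l₂ i2 t2) :
    j ∈ JfinSet l₁ l₂ i1 i2 t1 t2 := Or.inr h

theorem jfin_odd (S1 : Side l₁ i1 t1 0) (S2 : Side l₂ i2 t2 1) {j : ℕ} (hodd : Odd j) :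
    j ∈ JfinSet l₁ l₂ i1 i2 t1 t2 ↔
      ((Even (l₁ j) ∧ (j = 1 ∨ l₁ (j - 1) > l₁ j)) ∨
       (Odd (l₂ j) ∧ (j = 1 ∨ l₂ (j - 1) > l₂ j))) := by
  have hno : ¬ Even j := Nat.not_even_iff_odd.2 hodd
  constructor
  · rintro (((h | h) | h) | h)
    · obtain ⟨_, h2, h3⟩ := (jmin1_iff S1).1 h
      exact Or.inl ⟨h2, h3⟩
    · exact absurd ((jmax1_iff S1).1 h).1 hno
    · obtain ⟨_, h2, h3⟩ := (jmin2_iff S2).1 h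
      exact Or.inr ⟨h2, h3⟩
    · exact absurd ((jmax2_iff S2).1 h).1 hno
  · rintro (⟨h1, h2⟩ | ⟨h1, h2⟩)
    · exact mem_jfin_min1 ((jmin1_iff S1).2 ⟨hodd, h1, h2⟩)
    · exact mem_jfin_min2 ((jmin2_iff S2).2 ⟨hodd, h1, h2⟩)

theorem jfin_even (S1 : Side l₁ i1 t1 0) (S2 : Side l₂ i2 t2 1) {j : ℕ}
    (hj1 : 1 ≤ j) (heven : Even j) :
    j ∈ JfinSet l₁ l₂ i1 i2 t1 t2 ↔
      ((Even (l₁ j) ∧ l₁ j > l₁ (j + 1)) ∨ (Odd (l₂ j) ∧ l₂ j > l₂ (j + 1))) := by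
  have hno : ¬ Odd j := Nat.not_odd_iff_even.2 heven
  have hj2 : 2 ≤ j := by
    rw [Nat.even_iff] at heven; omega
  constructor
  · rintro (((h | h) | h) | h)
    · exact absurd ((jmin1_iff S1).1 h).1 hno
    · obtain ⟨_, _, h3, h4⟩ := (jmax1_iff S1).1 h
      exact Or.inl ⟨h3, h4⟩
    · exact absurd ((jmin2_iff S2).1 h).1 hno
    · obtain ⟨_, _, h3, h4⟩ := (jmax2_iff S2).1 h
      exact Or.inr ⟨h3, h4⟩
  · rintro (⟨h1, h2⟩ | ⟨h1, h2⟩)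
    · exact mem_jfin_max1 ((jmax1_iff S1).2 ⟨heven, hj2, h1, h2⟩)
    · exact mem_jfin_max2 ((jmax2_iff S2).2 ⟨heven, hj2, h1, h2⟩)

/-- Side 1 covering of `Icc j j'` for odd `j` with even part, when no `JfinSet`
element lies strictly between `j` and `j'`. -/
theorem up1 (S1 : Side l₁ i1 t1 0) {j j' : ℕ} (hj1 : 1 ≤ j) (hodd : Odd j)
    (hc : Even (l₁ j)) (hjj' : j ≤ j')
    (hup : ∀ b, b ∈ JfinSet l₁ l₂ i1 i2 t1 t2 → j < b → j' ≤ b) :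
    ∃ Δ, IsItv l₁ i1 t1 Δ ∧ Set.Icc j j' ⊆ idxSet l₁ Δ := by
  obtain ⟨Δ, hΔ, hjm⟩ := S1.cover hj1 (Nat.even_iff.1 hc)
  refine ⟨Δ, itvU_zero.1 hΔ, ?_⟩
  by_cases h0 : (0 : ℕ) ∈ Δ
  · intro k hk
    exact S1.seg_sub' hΔ h0 hjm hk.1
  · obtain ⟨b, hbG, hjb⟩ := S1.exists_greatest_of_mem h0 hjm
    have hbeven := (S1.greatest_prop hΔ hbG).1
    have hbmax : b ∈ Jmax1 l₁ i1 t1 := ⟨Δ, itvU_zero.1 hΔ, h0, hbG⟩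
    have hbj : j < b := by
      rcases eq_or_lt_of_le hjb with rfl | h
      · exact absurd hbeven (Nat.not_even_iff_odd.2 hodd)
      · exact h
    have hj'b : j' ≤ b := hup b (mem_jfin_max1 hbmax) hbj
    intro k hk
    exact S1.seg_sub hΔ hjm hbG.1 hk.1 (le_trans hk.2 hj'b)

theorem up2 (S2 : Side l₂ i2 t2 1) {j j' : ℕ} (hj1 : 1 ≤ j) (hodd : Odd j)
    (hc : Odd (l₂ j)) (hjj' : j ≤ j')
    (hup : ∀ b, b ∈ JfinSet l₁ l₂ i1 i2 t1 t2 → j < b → j' ≤ b) :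
    ∃ Δ, IsItvO l₂ i2 t2 Δ ∧ Set.Icc j j' ⊆ idxSet l₂ Δ := by
  obtain ⟨Δ, hΔ, hjm⟩ := S2.cover hj1 (Nat.odd_iff.1 hc)
  refine ⟨Δ, (itvU_one S2).1 hΔ, ?_⟩
  have h0 : (0 : ℕ) ∉ Δ := S2.zero_not_mem (by omega) hΔ
  obtain ⟨b, hbG, hjb⟩ := S2.exists_greatest_of_mem h0 hjm
  have hbeven := (S2.greatest_prop hΔ hbG).1
  have hbmax : b ∈ Jmax2 l₂ i2 t2 := ⟨Δ, (itvU_one S2).1 hΔ, hbG⟩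
  have hbj : j < b := by
    rcases eq_or_lt_of_le hjb with rfl | h
    · exact absurd hbeven (Nat.not_even_iff_odd.2 hodd)
    · exact h
  have hj'b : j' ≤ b := hup b (mem_jfin_max2 hbmax) hbj
  intro k hk
  exact S2.seg_sub hΔ hjm hbG.1 hk.1 (le_trans hk.2 hj'b)

theorem down1 (S1 : Side l₁ i1 t1 0) {j j₀ : ℕ} (hj1 : 1 ≤ j) (heven : Even j)
    (hc : Even (l₁ j)) (hjj₀ : j₀ ≤ j)
    (hdown : ∀ a, a ∈ JfinSet l₁ l₂ i1 i2 t1 t2 → a < j → a ≤ j₀) :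
    ∃ Δ, IsItv l₁ i1 t1 Δ ∧ Set.Icc j₀ j ⊆ idxSet l₁ Δ := by
  obtain ⟨Δ, hΔ, hjm⟩ := S1.cover hj1 (Nat.even_iff.1 hc)
  refine ⟨Δ, itvU_zero.1 hΔ, ?_⟩
  obtain ⟨a, haL, haj⟩ := exists_least_of_mem hjm
  have haodd := (S1.least_prop hΔ haL).1
  have hamin : a ∈ Jmin1 l₁ i1 t1 := ⟨Δ, itvU_zero.1 hΔ, haL⟩
  have haj' : a < j := by
    rcases eq_or_lt_of_le haj with rfl | h
    · exact absurd heven (Nat.not_even_iff_odd.2 haodd)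
    · exact h
  have haj₀ : a ≤ j₀ := hdown a (mem_jfin_min1 hamin) haj'
  intro k hk
  exact S1.seg_sub hΔ haL.1 hjm (le_trans haj₀ hk.1) hk.2

theorem down2 (S2 : Side l₂ i2 t2 1) {j j₀ : ℕ} (hj1 : 1 ≤ j) (heven : Even j)
    (hc : Odd (l₂ j)) (hjj₀ : j₀ ≤ j)
    (hdown : ∀ a, a ∈ JfinSet l₁ l₂ i1 i2 t1 t2 → a < j → a ≤ j₀) :
    ∃ Δ, IsItvO l₂ i2 t2 Δ ∧ Set.Icc j₀ j ⊆ idxSet l₂ Δ := by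
  obtain ⟨Δ, hΔ, hjm⟩ := S2.cover hj1 (Nat.odd_iff.1 hc)
  refine ⟨Δ, (itvU_one S2).1 hΔ, ?_⟩
  obtain ⟨a, haL, haj⟩ := exists_least_of_mem hjm
  have haodd := (S2.least_prop hΔ haL).1
  have hamin : a ∈ Jmin2 l₂ i2 t2 := ⟨Δ, (itvU_one S2).1 hΔ, haL⟩
  have haj' : a < j := by
    rcases eq_or_lt_of_le haj with rfl | h
    · exact absurd heven (Nat.not_even_iff_odd.2 haodd)
    · exact h
  have haj₀ : a ≤ j₀ := hdown a (mem_jfin_min2 hamin) haj'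
  intro k hk
  exact S2.seg_sub hΔ haL.1 hjm (le_trans haj₀ hk.1) hk.2

/-- No side-1 interval covers a set containing an index with odd `l₁`-part. -/
theorem nocov1 (S1 : Side l₁ i1 t1 0) {j : ℕ} (hc : ¬ Even (l₁ j)) {A : Set ℕ}
    (hjA : j ∈ A) : ¬ ∃ Δ, IsItv l₁ i1 t1 Δ ∧ A ⊆ idxSet l₁ Δ := by
  rintro ⟨Δ, hΔ, hsub⟩
  exact S1.not_cover (by rw [Nat.even_iff] at hc; omega) (itvU_zero.2 hΔ) (hsub hjA)

theorem nocov2 (S2 : Side l₂ i2 t2 1) {j : ℕ} (hc : ¬ Odd (l₂ j)) {A : Set ℕ}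
    (hjA : j ∈ A) : ¬ ∃ Δ, IsItvO l₂ i2 t2 Δ ∧ A ⊆ idxSet l₂ Δ := by
  rintro ⟨Δ, hΔ, hsub⟩
  exact S2.not_cover (by rw [Nat.odd_iff] at hc; omega) ((itvU_one S2).2 hΔ) (hsub hjA)

theorem charPlus (S1 : Side l₁ i1 t1 0) (S2 : Side l₂ i2 t2 1) {j : ℕ}
    (hj1 : 1 ≤ j) (hodd : Odd j) :
    j ∈ PplusRel l₁ l₂ i1 i2 t1 t2 ↔
      ((Even (l₁ j) ∧ (j = 1 ∨ l₁ (j - 1) > l₁ j) ∧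
          (Odd (l₂ j) → (j = 1 ∨ l₂ (j - 1) > l₂ j))) ∨
       (Odd (l₂ j) ∧ (j = 1 ∨ l₂ (j - 1) > l₂ j) ∧
          (Even (l₁ j) → (j = 1 ∨ l₁ (j - 1) > l₁ j)))) := by
  constructor
  · rintro ⟨-, J, hRel, hLeast⟩
    rcases hRel with ⟨j0, hj0, rfl⟩ | ⟨ja, jb, hja, hjb, hlt, hcons, hU, rfl⟩ |
      ⟨ja, hja, hmax, hU, rfl⟩
    · -- singleton
      have hjj0 : j = j0 := hLeast.1
      subst hjj0
      rcases hj0 with ⟨h1, h2⟩ | ⟨h1, _⟩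
      · obtain ⟨_, hc1, hd1⟩ := (jmin1_iff S1).1 h1
        obtain ⟨_, hc2, hd2⟩ := (jmin2_iff S2).1 h2
        exact Or.inl ⟨hc1, hd1, fun _ => hd2⟩
      · exact absurd ((jmax1_iff S1).1 h1).1 (Nat.not_even_iff_odd.2 hodd)
    · -- Icc
      have hjja : j = ja := le_antisymm (hLeast.2 ⟨le_rfl, le_of_lt hlt⟩) hLeast.1.1
      subst hjja
      have hup : ∀ b, b ∈ JfinSet l₁ l₂ i1 i2 t1 t2 → j < b → jb ≤ b := by
        intro b hb h
        by_contra hcon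
        exact hcons b h (by omega) hb
      rcases hU with ⟨hs1, hns2⟩ | ⟨hs2, hns1⟩
      · have hnc2 : ¬ Odd (l₂ j) := by
          intro hc2
          exact hns2 (up2 S2 hj1 hodd hc2 (le_of_lt hlt) hup)
        rcases (jfin_odd S1 S2 hodd).1 hja with ⟨hc1, hd1⟩ | ⟨hc2, _⟩
        · exact Or.inl ⟨hc1, hd1, fun hc => absurd hc hnc2⟩
        · exact absurd hc2 hnc2
      · have hnc1 : ¬ Even (l₁ j) := by
          intro hc1
          exact hns1 (up1 S1 hj1 hodd hc1 (le_of_lt hlt) hup)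
        rcases (jfin_odd S1 S2 hodd).1 hja with ⟨hc1, _⟩ | ⟨hc2, hd2⟩
        · exact absurd hc1 hnc1
        · exact Or.inr ⟨hc2, hd2, fun hc => absurd hc hnc1⟩
    · -- Ici
      have hjja : j = ja := le_antisymm (hLeast.2 Set.self_mem_Ici) hLeast.1
      subst hjja
      have hnc2 : ¬ Odd (l₂ j) := by
        intro hc2
        obtain ⟨Δ, hΔ, hjm⟩ := S2.cover hj1 (Nat.odd_iff.1 hc2)
        have h0 : (0 : ℕ) ∉ Δ := S2.zero_not_mem (by omega) hΔ
        obtain ⟨b, hbG, hjb⟩ := S2.exists_greatest_of_mem h0 hjm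
        have hbeven := (S2.greatest_prop hΔ hbG).1
        have hbj : j < b := by
          rcases eq_or_lt_of_le hjb with rfl | h
          · exact absurd hbeven (Nat.not_even_iff_odd.2 hodd)
          · exact h
        exact hmax b hbj (mem_jfin_max2 ⟨Δ, (itvU_one S2).1 hΔ, hbG⟩)
      rcases (jfin_odd S1 S2 hodd).1 hja with ⟨hc1, hd1⟩ | ⟨hc2, _⟩
      · exact Or.inl ⟨hc1, hd1, fun hc => absurd hc hnc2⟩
      · exact absurd hc2 hnc2
  · intro htgt
    by_cases hgood : (Even (l₁ j) ∧ (j = 1 ∨ l₁ (j - 1) > l₁ j)) ∧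
        (Odd (l₂ j) ∧ (j = 1 ∨ l₂ (j - 1) > l₂ j))
    · obtain ⟨⟨hc1, hd1⟩, hc2, hd2⟩ := hgood
      refine ⟨hodd, {j}, Or.inl ⟨j, Or.inl ⟨(jmin1_iff S1).2 ⟨hodd, hc1, hd1⟩,
        (jmin2_iff S2).2 ⟨hodd, hc2, hd2⟩⟩, rfl⟩, ⟨rfl, ?_⟩⟩
      rintro k rfl
      exact le_rfl
    · rcases htgt with ⟨hc1, hd1, himp⟩ | ⟨hc2, hd2, himp⟩
      · -- side 1 least, not good parity: so ¬ Odd (l₂ j)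
        have hnc2 : ¬ Odd (l₂ j) := fun hc2 => hgood ⟨⟨hc1, hd1⟩, hc2, himp hc2⟩
        have hjfin : j ∈ JfinSet l₁ l₂ i1 i2 t1 t2 :=
          mem_jfin_min1 ((jmin1_iff S1).2 ⟨hodd, hc1, hd1⟩)
        by_cases hA : ∃ k, k ∈ JfinSet l₁ l₂ i1 i2 t1 t2 ∧ j < k
        · set A := {k | k ∈ JfinSet l₁ l₂ i1 i2 t1 t2 ∧ j < k} with hAdef
          have hAne : A.Nonempty := hA
          have hj'A := Nat.sInf_mem hAne
          set j' := sInf A with hj'def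
          obtain ⟨hj'fin, hjj'⟩ := hj'A
          have hcons : ∀ k, j < k → k < j' → k ∉ JfinSet l₁ l₂ i1 i2 t1 t2 := by
            intro k h1 h2 hk
            have : j' ≤ k := Nat.sInf_le ⟨hk, h1⟩
            omega
          have hup : ∀ b, b ∈ JfinSet l₁ l₂ i1 i2 t1 t2 → j < b → j' ≤ b :=
            fun b hb h => Nat.sInf_le ⟨hb, h⟩
          obtain ⟨Δ, hΔ, hsub⟩ := up1 S1 hj1 hodd hc1 (le_of_lt hjj') hup
          refine ⟨hodd, Set.Icc j j', Or.inr (Or.inl ⟨j, j', hjfin, hj'fin, hjj', hcons,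
            Or.inl ⟨⟨Δ, hΔ, hsub⟩, nocov2 S2 hnc2 ⟨le_rfl, le_of_lt hjj'⟩⟩, rfl⟩),
            ⟨le_rfl, le_of_lt hjj'⟩, fun k hk => hk.1⟩
        · push_neg at hA
          have hmax : ∀ k, j < k → k ∉ JfinSet l₁ l₂ i1 i2 t1 t2 :=
            fun k hk hfin => absurd hk (not_lt.2 (hA k hfin))
          obtain ⟨Δ, hΔ, hL⟩ := S1.exists_least_itv hj1 hodd (Nat.even_iff.1 hc1) hd1
          have h0 : (0 : ℕ) ∈ Δ := by
            by_contra h0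
            obtain ⟨b, hbG, hjb⟩ := S1.exists_greatest_of_mem h0 hL.1
            have hbeven := (S1.greatest_prop hΔ hbG).1
            have hbj : j < b := by
              rcases eq_or_lt_of_le hjb with rfl | h
              · exact absurd hbeven (Nat.not_even_iff_odd.2 hodd)
              · exact h
            exact hmax b hbj (mem_jfin_max1 ⟨Δ, itvU_zero.1 hΔ, h0, hbG⟩)
          have hsub : Set.Ici j ⊆ idxSet l₁ Δ := fun k hk => S1.seg_sub' hΔ h0 hL.1 hk
          exact ⟨hodd, Set.Ici j, Or.inr (Or.inr ⟨j, hjfin, hmax,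
            Or.inl ⟨⟨Δ, itvU_zero.1 hΔ, hsub⟩, nocov2 S2 hnc2 (Set.self_mem_Ici)⟩, rfl⟩),
            Set.self_mem_Ici, fun k hk => hk⟩
      · -- side 2 least
        have hnc1 : ¬ Even (l₁ j) := fun hc1 => hgood ⟨⟨hc1, himp hc1⟩, hc2, hd2⟩
        have hjfin : j ∈ JfinSet l₁ l₂ i1 i2 t1 t2 :=
          mem_jfin_min2 ((jmin2_iff S2).2 ⟨hodd, hc2, hd2⟩)
        obtain ⟨Δ, hΔ, hL⟩ := S2.exists_least_itv hj1 hodd (Nat.odd_iff.1 hc2) hd2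
        have h0 : (0 : ℕ) ∉ Δ := S2.zero_not_mem (by omega) hΔ
        obtain ⟨b, hbG, hjb⟩ := S2.exists_greatest_of_mem h0 hL.1
        have hbeven := (S2.greatest_prop hΔ hbG).1
        have hbj : j < b := by
          rcases eq_or_lt_of_le hjb with rfl | h
          · exact absurd hbeven (Nat.not_even_iff_odd.2 hodd)
          · exact h
        have hbfin : b ∈ JfinSet l₁ l₂ i1 i2 t1 t2 :=
          mem_jfin_max2 ⟨Δ, (itvU_one S2).1 hΔ, hbG⟩
        have hAne : {k | k ∈ JfinSet l₁ l₂ i1 i2 t1 t2 ∧ j < k}.Nonempty := ⟨b, hbfin, hbj⟩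
        have hj'A := Nat.sInf_mem hAne
        obtain ⟨hj'fin, hjj'⟩ := hj'A
        have hj'b : sInf {k | k ∈ JfinSet l₁ l₂ i1 i2 t1 t2 ∧ j < k} ≤ b :=
          Nat.sInf_le ⟨hbfin, hbj⟩
        have hcons : ∀ k, j < k → k < sInf {k | k ∈ JfinSet l₁ l₂ i1 i2 t1 t2 ∧ j < k} →
            k ∉ JfinSet l₁ l₂ i1 i2 t1 t2 := by
          intro k h1 h2 hk
          have : sInf {k | k ∈ JfinSet l₁ l₂ i1 i2 t1 t2 ∧ j < k} ≤ k := Nat.sInf_le ⟨hk, h1⟩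
          omega
        have hsub : Set.Icc j (sInf {k | k ∈ JfinSet l₁ l₂ i1 i2 t1 t2 ∧ j < k}) ⊆
            idxSet l₂ Δ := fun k hk =>
          S2.seg_sub hΔ hL.1 hbG.1 hk.1 (le_trans hk.2 hj'b)
        exact ⟨hodd, _, Or.inr (Or.inl ⟨j, _, hjfin, hj'fin, hjj', hcons,
          Or.inr ⟨⟨Δ, (itvU_one S2).1 hΔ, hsub⟩, nocov1 S1 hnc1 ⟨le_rfl, le_of_lt hjj'⟩⟩, rfl⟩),
          ⟨le_rfl, le_of_lt hjj'⟩, fun k hk => hk.1⟩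

theorem charMinus (S1 : Side l₁ i1 t1 0) (S2 : Side l₂ i2 t2 1) {j : ℕ}
    (hj1 : 1 ≤ j) (heven : Even j) :
    j ∈ PminusRel l₁ l₂ i1 i2 t1 t2 ↔
      ((Even (l₁ j) ∧ l₁ j > l₁ (j + 1) ∧ (Odd (l₂ j) → l₂ j > l₂ (j + 1))) ∨
       (Odd (l₂ j) ∧ l₂ j > l₂ (j + 1) ∧ (Even (l₁ j) → l₁ j > l₁ (j + 1)))) := by
  have hj2 : 2 ≤ j := by rw [Nat.even_iff] at heven; omega
  constructor
  · rintro ⟨-, J, hRel, hGreatest⟩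
    rcases hRel with ⟨j0, hj0, rfl⟩ | ⟨ja, jb, hja, hjb, hlt, hcons, hU, rfl⟩ |
      ⟨ja, hja, hmax, hU, rfl⟩
    · have hjj0 : j = j0 := hGreatest.1
      subst hjj0
      rcases hj0 with ⟨h1, _⟩ | ⟨h1, h2⟩
      · exact absurd ((jmin1_iff S1).1 h1).1 (Nat.not_odd_iff_even.2 heven)
      · obtain ⟨_, _, hc1, hd1⟩ := (jmax1_iff S1).1 h1
        obtain ⟨_, _, hc2, hd2⟩ := (jmax2_iff S2).1 h2
        exact Or.inl ⟨hc1, hd1, fun _ => hd2⟩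
    · have hjjb : j = jb := le_antisymm hGreatest.1.2 (hGreatest.2 ⟨le_of_lt hlt, le_rfl⟩)
      subst hjjb
      have hdown : ∀ a, a ∈ JfinSet l₁ l₂ i1 i2 t1 t2 → a < j → a ≤ ja := by
        intro a ha h
        by_contra hcon
        exact hcons a (by omega) h ha
      rcases hU with ⟨hs1, hns2⟩ | ⟨hs2, hns1⟩
      · have hnc2 : ¬ Odd (l₂ j) := by
          intro hc2
          exact hns2 (down2 S2 hj1 heven hc2 (le_of_lt hlt) hdown)
        rcases (jfin_even S1 S2 hj1 heven).1 hjb with ⟨hc1, hd1⟩ | ⟨hc2, _⟩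
        · exact Or.inl ⟨hc1, hd1, fun hc => absurd hc hnc2⟩
        · exact absurd hc2 hnc2
      · have hnc1 : ¬ Even (l₁ j) := by
          intro hc1
          exact hns1 (down1 S1 hj1 heven hc1 (le_of_lt hlt) hdown)
        rcases (jfin_even S1 S2 hj1 heven).1 hjb with ⟨hc1, _⟩ | ⟨hc2, hd2⟩
        · exact absurd hc1 hnc1
        · exact Or.inr ⟨hc2, hd2, fun hc => absurd hc hnc1⟩
    · exfalso
      have h1 : j + 1 ∈ Set.Ici ja := by
        have := hGreatest.1
        simp only [Set.mem_Ici] at this ⊢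
        omega
      have := hGreatest.2 h1
      omega
  · intro htgt
    by_cases hgood : (Even (l₁ j) ∧ l₁ j > l₁ (j + 1)) ∧ (Odd (l₂ j) ∧ l₂ j > l₂ (j + 1))
    · obtain ⟨⟨hc1, hd1⟩, hc2, hd2⟩ := hgood
      refine ⟨heven, {j}, Or.inl ⟨j, Or.inr ⟨(jmax1_iff S1).2 ⟨heven, hj2, hc1, hd1⟩,
        (jmax2_iff S2).2 ⟨heven, hj2, hc2, hd2⟩⟩, rfl⟩, ⟨rfl, ?_⟩⟩
      rintro k rfl
      exact le_rfl
    · rcases htgt with ⟨hc1, hd1, himp⟩ | ⟨hc2, hd2, himp⟩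
      · have hnc2 : ¬ Odd (l₂ j) := fun hc2 => hgood ⟨⟨hc1, hd1⟩, hc2, himp hc2⟩
        have hjfin : j ∈ JfinSet l₁ l₂ i1 i2 t1 t2 :=
          mem_jfin_max1 ((jmax1_iff S1).2 ⟨heven, hj2, hc1, hd1⟩)
        obtain ⟨Δ, hΔ, h0, hG⟩ := S1.exists_greatest_itv hj1 heven (Nat.even_iff.1 hc1) hd1
        obtain ⟨a, haL, haj⟩ := exists_least_of_mem hG.1
        have haodd := (S1.least_prop hΔ haL).1
        have haj' : a < j := by
          rcases eq_or_lt_of_le haj with rfl | h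
          · exact absurd heven (Nat.not_even_iff_odd.2 haodd)
          · exact h
        have hafin : a ∈ JfinSet l₁ l₂ i1 i2 t1 t2 :=
          mem_jfin_min1 ⟨Δ, itvU_zero.1 hΔ, haL⟩
        have hBne : {k | k ∈ JfinSet l₁ l₂ i1 i2 t1 t2 ∧ k < j}.Nonempty := ⟨a, hafin, haj'⟩
        have hBdd : BddAbove {k | k ∈ JfinSet l₁ l₂ i1 i2 t1 t2 ∧ k < j} :=
          ⟨j, fun k hk => le_of_lt hk.2⟩
        have hj₀B := Nat.sSup_mem hBne hBdd
        obtain ⟨hj₀fin, hj₀j⟩ := hj₀B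
        have haj₀ : a ≤ sSup {k | k ∈ JfinSet l₁ l₂ i1 i2 t1 t2 ∧ k < j} :=
          le_csSup hBdd ⟨hafin, haj'⟩
        have hcons : ∀ k, sSup {k | k ∈ JfinSet l₁ l₂ i1 i2 t1 t2 ∧ k < j} < k → k < j →
            k ∉ JfinSet l₁ l₂ i1 i2 t1 t2 := by
          intro k h1 h2 hk
          have := le_csSup hBdd (⟨hk, h2⟩ : k ∈ {k | k ∈ JfinSet l₁ l₂ i1 i2 t1 t2 ∧ k < j})
          omega
        have hsub : Set.Icc (sSup {k | k ∈ JfinSet l₁ l₂ i1 i2 t1 t2 ∧ k < j}) j ⊆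
            idxSet l₁ Δ := fun k hk =>
          S1.seg_sub hΔ haL.1 hG.1 (le_trans haj₀ hk.1) hk.2
        exact ⟨heven, _, Or.inr (Or.inl ⟨_, j, hj₀fin, hjfin, hj₀j, hcons,
          Or.inl ⟨⟨Δ, itvU_zero.1 hΔ, hsub⟩, nocov2 S2 hnc2 ⟨le_of_lt hj₀j, le_rfl⟩⟩, rfl⟩),
          ⟨le_of_lt hj₀j, le_rfl⟩, fun k hk => hk.2⟩
      · have hnc1 : ¬ Even (l₁ j) := fun hc1 => hgood ⟨⟨hc1, himp hc1⟩, hc2, hd2⟩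
        have hjfin : j ∈ JfinSet l₁ l₂ i1 i2 t1 t2 :=
          mem_jfin_max2 ((jmax2_iff S2).2 ⟨heven, hj2, hc2, hd2⟩)
        obtain ⟨Δ, hΔ, h0, hG⟩ := S2.exists_greatest_itv hj1 heven (Nat.odd_iff.1 hc2) hd2
        obtain ⟨a, haL, haj⟩ := exists_least_of_mem hG.1
        have haodd := (S2.least_prop hΔ haL).1
        have haj' : a < j := by
          rcases eq_or_lt_of_le haj with rfl | h
          · exact absurd heven (Nat.not_even_iff_odd.2 haodd)
          · exact h
        have hafin : a ∈ JfinSet l₁ l₂ i1 i2 t1 t2 :=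
          mem_jfin_min2 ⟨Δ, (itvU_one S2).1 hΔ, haL⟩
        have hBne : {k | k ∈ JfinSet l₁ l₂ i1 i2 t1 t2 ∧ k < j}.Nonempty := ⟨a, hafin, haj'⟩
        have hBdd : BddAbove {k | k ∈ JfinSet l₁ l₂ i1 i2 t1 t2 ∧ k < j} :=
          ⟨j, fun k hk => le_of_lt hk.2⟩
        have hj₀B := Nat.sSup_mem hBne hBdd
        obtain ⟨hj₀fin, hj₀j⟩ := hj₀B
        have haj₀ : a ≤ sSup {k | k ∈ JfinSet l₁ l₂ i1 i2 t1 t2 ∧ k < j} :=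
          le_csSup hBdd ⟨hafin, haj'⟩
        have hcons : ∀ k, sSup {k | k ∈ JfinSet l₁ l₂ i1 i2 t1 t2 ∧ k < j} < k → k < j →
            k ∉ JfinSet l₁ l₂ i1 i2 t1 t2 := by
          intro k h1 h2 hk
          have := le_csSup hBdd (⟨hk, h2⟩ : k ∈ {k | k ∈ JfinSet l₁ l₂ i1 i2 t1 t2 ∧ k < j})
          omega
        have hsub : Set.Icc (sSup {k | k ∈ JfinSet l₁ l₂ i1 i2 t1 t2 ∧ k < j}) j ⊆
            idxSet l₂ Δ := fun k hk =>
          S2.seg_sub hΔ haL.1 hG.1 (le_trans haj₀ hk.1) hk.2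
        exact ⟨heven, _, Or.inr (Or.inl ⟨_, j, hj₀fin, hjfin, hj₀j, hcons,
          Or.inr ⟨⟨Δ, (itvU_one S2).1 hΔ, hsub⟩, nocov1 S1 hnc1 ⟨le_of_lt hj₀j, le_rfl⟩⟩, rfl⟩),
          ⟨le_of_lt hj₀j, le_rfl⟩, fun k hk => hk.2⟩

end Two
end ZE
namespace ZE

theorem mult_zero_evz {l : ℕ → ℕ} (hz : EventuallyZero l) : mult l 0 = 0 := by
  obtain ⟨N, hN⟩ := hz
  have hinf : {j : ℕ | 1 ≤ j ∧ l j = 0}.Infinite := by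
    apply Set.infinite_of_not_bddAbove
    rintro ⟨B, hB⟩
    have : max N 1 + B + 1 ∈ {j : ℕ | 1 ≤ j ∧ l j = 0} :=
      ⟨by omega, hN _ (by omega)⟩
    have := hB this
    omega
  have : Infinite ↥{j : ℕ | 1 ≤ j ∧ l j = 0} := Set.infinite_coe_iff.2 hinf
  rw [mult]
  exact Nat.card_eq_zero_of_infinite

theorem mkSide1 {l₁ i1 : ℕ → ℕ} {t1 : ℕ} (hp1 : IsPartition l₁) (hz1 : EventuallyZero l₁)
    (hsymp1 : IsSymplectic l₁) (hspec1 : IsSpecial l₁) (hm1 : MarkedSeq l₁ i1 t1) :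
    Side l₁ i1 t1 0 := by
  obtain ⟨ht, hdec, hpare, hoddm, hcompl⟩ := hm1
  refine ⟨hp1, hz1, hspec1, ht, hdec, fun h h1 h2 => Nat.even_iff.1 (hpare h h1 h2),
    hoddm, ?_⟩
  intro i hi
  have hi0 : i ≠ 0 := by
    intro h
    rw [h, mult_zero_evz hz1] at hi
    have := Nat.odd_iff.1 hi; omega
  have hieven : Even i := by
    by_contra hc
    have := hsymp1 i (Nat.odd_iff.2 (by rw [Nat.even_iff] at hc; omega))
    rw [Nat.even_iff] at this
    rw [Nat.odd_iff] at hi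
    omega
  exact hcompl i (by omega) hieven hi

theorem mkSide2 {l₂ i2 : ℕ → ℕ} {t2 : ℕ} (hp2 : IsPartition l₂) (hz2 : EventuallyZero l₂)
    (horth2 : IsOrthogonal l₂) (hspec2 : IsSpecial l₂) (hm2 : MarkedSeqO l₂ i2 t2) :
    Side l₂ i2 t2 1 := by
  obtain ⟨ht, hdec, hpare, hoddm, hcompl⟩ := hm2
  refine ⟨hp2, hz2, hspec2, ht, hdec, fun h h1 h2 => Nat.odd_iff.1 (hpare h h1 h2),
    fun h h1 h2 _ => hoddm h h1 h2, ?_⟩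
  intro i hi
  have hi0 : i ≠ 0 := by
    intro h
    rw [h, mult_zero_evz hz2] at hi
    have := Nat.odd_iff.1 hi; omega
  have hiodd : Odd i := by
    by_contra hc
    have := horth2 i (by omega) (Nat.even_iff.2 (by rw [Nat.odd_iff] at hc; omega))
    rw [Nat.even_iff] at this
    rw [Nat.odd_iff] at hi
    omega
  exact hcompl i hiodd hi

end ZE
/-- Lemma 3.1: `ζ(λ₁) + ζ(λ₂) = ζ_{λ₁,λ₂}(λ) + ξ`. -/
theorem zeta_endoscopic (n₁ n₂ : ℕ) (l₁ l₂ i1 i2 : ℕ → ℕ) (t1 t2 : ℕ)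
    (hp1 : IsPartition l₁) (hz1 : EventuallyZero l₁) (hs1 : psum l₁ = 2 * n₁)
    (hsymp1 : IsSymplectic l₁) (hspec1 : IsSpecial l₁)
    (hp2 : IsPartition l₂) (hz2 : EventuallyZero l₂) (hs2 : psum l₂ = 2 * n₂)
    (horth2 : IsOrthogonal l₂) (hspec2 : IsSpecial l₂)
    (hm1 : MarkedSeq l₁ i1 t1) (hm2 : MarkedSeqO l₂ i2 t2) :
    ∀ j, 1 ≤ j →
      zSeq l₁ j + zSeqO l₂ j = zetaRel l₁ l₂ i1 i2 t1 t2 j + xiSeq l₁ l₂ j := by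
  intro j hj
  have S1 : ZE.Side l₁ i1 t1 0 := ZE.mkSide1 hp1 hz1 hsymp1 hspec1 hm1
  have S2 : ZE.Side l₂ i2 t2 1 := ZE.mkSide2 hp2 hz2 horth2 hspec2 hm2
  rcases Nat.even_or_odd j with heven | hodd
  · -- even j
    have hnodd : ¬ Odd j := Nat.not_odd_iff_even.2 heven
    have hj2 : 2 ≤ j := by rw [Nat.even_iff] at heven; omega
    have hP1 : j ∉ Pplus l₁ := by
      intro h
      simp only [Pplus, Set.mem_setOf_eq] at h
      exact hnodd h.1
    have hP2 : j ∉ PplusO l₂ := by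
      intro h
      simp only [PplusO, Set.mem_setOf_eq] at h
      exact hnodd h.1
    have hJp : j ∉ Jplus l₁ l₂ := by
      intro h
      simp only [Jplus, Set.mem_setOf_eq] at h
      exact hnodd h.1
    have hZp : j ∉ PplusRel l₁ l₂ i1 i2 t1 t2 := by
      intro h
      simp only [PplusRel, Set.mem_setOf_eq] at h
      exact hnodd h.1
    have hM1 : j ∈ Pminus l₁ ↔ (Even (l₁ j) ∧ l₁ j > l₁ (j + 1)) := by
      simp only [Pminus, Set.mem_setOf_eq]
      constructor
      · rintro ⟨_, _, a, b⟩; exact ⟨a, b⟩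
      · rintro ⟨a, b⟩; exact ⟨hj2, heven, a, b⟩
    have hM2 : j ∈ PminusO l₂ ↔ (Odd (l₂ j) ∧ l₂ j > l₂ (j + 1)) := by
      simp only [PminusO, Set.mem_setOf_eq]
      constructor
      · rintro ⟨_, _, a, b⟩; exact ⟨a, b⟩
      · rintro ⟨a, b⟩; exact ⟨hj2, heven, a, b⟩
    have hJm : j ∈ Jminus l₁ l₂ ↔
        ((Even (l₁ j) ∧ Odd (l₂ j)) ∧ (l₁ j > l₁ (j + 1) ∨ l₂ j > l₂ (j + 1))) := by
      simp only [Jminus, GoodIdx, Set.mem_setOf_eq]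
      constructor
      · rintro ⟨_, _, a, b⟩; exact ⟨a, b⟩
      · rintro ⟨a, b⟩; exact ⟨hj2, heven, a, b⟩
    have hZm : j ∈ PminusRel l₁ l₂ i1 i2 t1 t2 ↔
        ((Even (l₁ j) ∧ l₁ j > l₁ (j + 1) ∧ (Odd (l₂ j) → l₂ j > l₂ (j + 1))) ∨
         (Odd (l₂ j) ∧ l₂ j > l₂ (j + 1) ∧ (Even (l₁ j) → l₁ j > l₁ (j + 1)))) :=
      ZE.charMinus S1 S2 (by omega) heven
    simp only [zSeq, zSeqO, zetaRel, xiSeq]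
    by_cases hc1 : Even (l₁ j) <;> by_cases hc2 : Odd (l₂ j) <;>
      by_cases hd1 : l₁ j > l₁ (j + 1) <;> by_cases hd2 : l₂ j > l₂ (j + 1) <;>
      simp [hP1, hP2, hJp, hZp, hM1, hM2, hJm, hZm, hc1, hc2, hd1, hd2]
  · -- odd j
    have hneven : ¬ Even j := Nat.not_even_iff_odd.2 hodd
    have hM1 : j ∉ Pminus l₁ := by
      intro h
      simp only [Pminus, Set.mem_setOf_eq] at h
      exact hneven h.2.1
    have hM2 : j ∉ PminusO l₂ := by
      intro h
      simp only [PminusO, Set.mem_setOf_eq] at h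
      exact hneven h.2.1
    have hJm : j ∉ Jminus l₁ l₂ := by
      intro h
      simp only [Jminus, Set.mem_setOf_eq] at h
      exact hneven h.2.1
    have hZm : j ∉ PminusRel l₁ l₂ i1 i2 t1 t2 := by
      intro h
      simp only [PminusRel, Set.mem_setOf_eq] at h
      exact hneven h.1
    have hP1 : j ∈ Pplus l₁ ↔ (Even (l₁ j) ∧ (j = 1 ∨ l₁ (j - 1) > l₁ j)) := by
      simp only [Pplus, Set.mem_setOf_eq]
      constructor
      · rintro ⟨_, a, b⟩; exact ⟨a, b⟩
      · rintro ⟨a, b⟩; exact ⟨hodd, a, b⟩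
    have hP2 : j ∈ PplusO l₂ ↔ (Odd (l₂ j) ∧ (j = 1 ∨ l₂ (j - 1) > l₂ j)) := by
      simp only [PplusO, Set.mem_setOf_eq]
      constructor
      · rintro ⟨_, a, b⟩; exact ⟨a, b⟩
      · rintro ⟨a, b⟩; exact ⟨hodd, a, b⟩
    have hJp : j ∈ Jplus l₁ l₂ ↔ ((Even (l₁ j) ∧ Odd (l₂ j)) ∧
        ((j = 1 ∨ l₁ (j - 1) > l₁ j) ∨ (j = 1 ∨ l₂ (j - 1) > l₂ j))) := by
      simp only [Jplus, GoodIdx, Set.mem_setOf_eq]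
      constructor
      · rintro ⟨_, a, b⟩
        exact ⟨a, by tauto⟩
      · rintro ⟨a, b⟩
        exact ⟨hodd, a, by tauto⟩
    have hZp : j ∈ PplusRel l₁ l₂ i1 i2 t1 t2 ↔
        ((Even (l₁ j) ∧ (j = 1 ∨ l₁ (j - 1) > l₁ j) ∧
            (Odd (l₂ j) → (j = 1 ∨ l₂ (j - 1) > l₂ j))) ∨
         (Odd (l₂ j) ∧ (j = 1 ∨ l₂ (j - 1) > l₂ j) ∧
            (Even (l₁ j) → (j = 1 ∨ l₁ (j - 1) > l₁ j)))) :=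
      ZE.charPlus S1 S2 hj hodd
    simp only [zSeq, zSeqO, zetaRel, xiSeq]
    by_cases hc1 : Even (l₁ j) <;> by_cases hc2 : Odd (l₂ j) <;>
      by_cases hd1 : (j = 1 ∨ l₁ (j - 1) > l₁ j) <;> by_cases hd2 : (j = 1 ∨ l₂ (j - 1) > l₂ j) <;>
      simp [hP1, hP2, hJp, hZp, hM1, hM2, hJm, hZm, hc1, hc2, hd1, hd2]
end
end
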